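/- Let n, r, b be integers with r ≥ 2 and 1 < b < n, set k = rb, let F = (F_1,…,F_n) be a family of subsets of a set S with V(F) = {τ_1,…,τ_m}, and fix an r-element set J ⊆ [m]. Call a permutation ρ of [n] bad for J if there exist i_1 < i_2 < ⋯ < i_k in [n] such that for every s ∈ {1, b+1, 2b+1, …, (r−1)b+1} some j ∈ J is ρ-compatible with {i_s, i_{s+1}, …, i_k}. Then the number of permutations of [n] that are bad for J is at most n! · (1 − (b/n)^{1/(r−1)})^{b(r−1)}. -/

import Mathlib

open Finset
open scoped Classical

variable {ι S : Type*}

def region (F : ι → Set S) (τ : Finset ι) : Set S :=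
  (⋂ i ∈ τ, F i) \ ⋃ i ∉ τ, F i

def venn (F : ι → Set S) : Set (Finset ι) :=
  {τ | τ.Nonempty ∧ (region F τ).Nonempty}

def nerve (F : ι → Set S) : Set (Finset ι) :=
  {σ | σ.Nonempty ∧ (⋂ i ∈ σ, F i).Nonempty}

def IsIEVector (F : ι → Set S) (x : Finset ι → ℝ) : Prop :=
  (∀ σ, σ ∉ nerve F → x σ = 0) ∧
  ∀ τ ∈ venn F, (∑ σ ∈ τ.powerset.filter (· ∈ nerve F), x σ) = 1

/-- A Venn-diagram cell `τ` (a "row" of the permuted incidence matrix `Γ_ρ`) is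
`ρ`-compatible with a nonempty set `I ⊆ [n]` if `I ⊆ ρ(τ)` and `ρ(τ)` contains no element
smaller than `min I` (equivalently, every element of `ρ(τ)` is `≥` some element of `I`). -/
def Compatible {n : ℕ} (ρ : Equiv.Perm (Fin n)) (τ I : Finset (Fin n)) : Prop :=
  I ⊆ τ.image ⇑ρ ∧ ∀ b ∈ τ.image ⇑ρ, ∃ a ∈ I, a ≤ b

namespace S14

variable {n : ℕ}
/-- the bound function -/
noncomputable def Bb (b m γ : ℕ) : ℝ :=
  if b ≤ γ then (1 - ((b : ℝ) / (γ : ℝ)) ^ ((1:ℝ)/((m:ℝ)-1))) ^ (b * (m-1)) else 0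

lemma rpow_base_mem {b γ : ℕ} (hb : 1 ≤ b) (hbγ : b ≤ γ) {e : ℝ} (he : 0 ≤ e) :
    0 ≤ ((b : ℝ) / (γ : ℝ)) ^ e ∧ ((b : ℝ) / (γ : ℝ)) ^ e ≤ 1 := by
  have hγ : (0:ℝ) < γ := by
    have : (0:ℕ) < γ := lt_of_lt_of_le hb hbγ
    exact_mod_cast this
  have h0 : (0:ℝ) ≤ (b : ℝ) / (γ : ℝ) := by positivity
  have h1 : (b : ℝ) / (γ : ℝ) ≤ 1 := by
    rw [div_le_one hγ]; exact_mod_cast hbγ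
  exact ⟨Real.rpow_nonneg h0 e, Real.rpow_le_one h0 h1 he⟩

lemma exp_nonneg {m : ℕ} (hm : 1 ≤ m) : (0:ℝ) ≤ (1:ℝ)/((m:ℝ)-1) := by
  rcases Nat.lt_or_ge m 2 with h | h
  · have : m = 1 := by omega
    subst this; norm_num
  · have : (1:ℝ) ≤ (m:ℝ) - 1 := by
      have : (2:ℝ) ≤ (m:ℝ) := by exact_mod_cast h
      linarith
    positivity

lemma Bb_nonneg (b m γ : ℕ) (hb : 1 ≤ b) (hm : 1 ≤ m) : 0 ≤ Bb b m γ := by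
  unfold Bb
  split
  · next h =>
    have := rpow_base_mem hb h (exp_nonneg hm)
    have : (0:ℝ) ≤ 1 - ((b : ℝ) / (γ : ℝ)) ^ ((1:ℝ)/((m:ℝ)-1)) := by linarith [this.2]
    positivity
  · exact le_refl 0

lemma Bb_le_one (b m γ : ℕ) (hb : 1 ≤ b) (hm : 1 ≤ m) : Bb b m γ ≤ 1 := by
  unfold Bb
  split
  · next h =>
    have hh := rpow_base_mem hb h (exp_nonneg hm)
    have h0 : (0:ℝ) ≤ 1 - ((b : ℝ) / (γ : ℝ)) ^ ((1:ℝ)/((m:ℝ)-1)) := by linarith [hh.2]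
    have h1 : 1 - ((b : ℝ) / (γ : ℝ)) ^ ((1:ℝ)/((m:ℝ)-1)) ≤ 1 := by linarith [hh.1]
    exact pow_le_one₀ h0 h1
  · norm_num

lemma Bb_mono (b m : ℕ) (hb : 1 ≤ b) (hm : 1 ≤ m) {γ γ' : ℕ} (h : γ ≤ γ') :
    Bb b m γ ≤ Bb b m γ' := by
  by_cases hγ : b ≤ γ
  · have hγ' : b ≤ γ' := le_trans hγ h
    unfold Bb
    rw [if_pos hγ, if_pos hγ']
    have hγpos : (0:ℝ) < γ := by exact_mod_cast lt_of_lt_of_le hb hγ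
    have hbase : ((b:ℝ)/(γ':ℝ)) ≤ ((b:ℝ)/(γ:ℝ)) := by
      apply div_le_div_of_nonneg_left (by positivity) hγpos
      exact_mod_cast h
    have h0 : (0:ℝ) ≤ (b:ℝ)/(γ':ℝ) := by positivity
    have hx : ((b:ℝ)/(γ':ℝ)) ^ ((1:ℝ)/((m:ℝ)-1)) ≤ ((b:ℝ)/(γ:ℝ)) ^ ((1:ℝ)/((m:ℝ)-1)) :=
      Real.rpow_le_rpow h0 hbase (exp_nonneg hm)
    have hh := rpow_base_mem hb hγ (exp_nonneg hm)
    apply pow_le_pow_left₀ (by linarith [hh.2])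
    linarith
  · rw [Bb, if_neg hγ]
    exact Bb_nonneg _ _ _ hb hm


lemma desc_pos {x b : ℕ} (h : b ≤ x) : 0 < x.descFactorial b := by
  rw [Nat.descFactorial_eq_factorial_mul_choose]
  exact Nat.mul_pos (Nat.factorial_pos b) (Nat.choose_pos h)

lemma choose_superadd (b a c : ℕ) (hb : 1 ≤ b) :
    a.choose b + c.choose b ≤ (a + c).choose b := by
  rw [Nat.add_choose_eq]
  have hmem1 : ((b, 0) : ℕ × ℕ) ∈ Finset.HasAntidiagonal.antidiagonal b := by simp
  have hmem2 : ((0, b) : ℕ × ℕ) ∈ Finset.HasAntidiagonal.antidiagonal b := by simp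
  have hne : ((b,0) : ℕ × ℕ) ≠ (0, b) := by
    intro h; injection h with h1 h2; omega
  have hsub : ({(b,0),(0,b)} : Finset (ℕ × ℕ)) ⊆ Finset.HasAntidiagonal.antidiagonal b := by
    intro x hx; simp at hx; rcases hx with h | h <;> simp [h]
  calc a.choose b + c.choose b
      = ∑ ij ∈ ({(b,0),(0,b)} : Finset (ℕ × ℕ)), a.choose ij.1 * c.choose ij.2 := by
        rw [Finset.sum_insert (by simp [hne]), Finset.sum_singleton]; simp
    _ ≤ ∑ ij ∈ Finset.HasAntidiagonal.antidiagonal b, a.choose ij.1 * c.choose ij.2 :=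
        Finset.sum_le_sum_of_subset hsub

lemma desc_superadd (b a c : ℕ) (hb : 1 ≤ b) :
    a.descFactorial b + c.descFactorial b ≤ (a + c).descFactorial b := by
  rw [Nat.descFactorial_eq_factorial_mul_choose, Nat.descFactorial_eq_factorial_mul_choose,
    Nat.descFactorial_eq_factorial_mul_choose, ← Nat.mul_add]
  exact Nat.mul_le_mul_left _ (choose_superadd b a c hb)

lemma sum_desc_le {α : Type*} (b : ℕ) (hb : 1 ≤ b) (s : Finset α) (f : α → ℕ) :
    ∑ τ ∈ s, (f τ).descFactorial b ≤ (∑ τ ∈ s, f τ).descFactorial b := by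
  classical
  induction s using Finset.induction_on with
  | empty =>
    cases b with
    | zero => omega
    | succ k => simp
  | insert a s hx ih =>
    rw [Finset.sum_insert hx, Finset.sum_insert hx]
    calc (f a).descFactorial b + ∑ τ ∈ s, (f τ).descFactorial b
        ≤ (f a).descFactorial b + (∑ τ ∈ s, f τ).descFactorial b := by
          exact Nat.add_le_add_left ih _
      _ ≤ (f a + ∑ τ ∈ s, f τ).descFactorial b := desc_superadd b _ _ hb

lemma desc_add (d a : ℕ) : ∀ c, d.descFactorial (a + c) = d.descFactorial a * (d - a).descFactorial c := by
  intro c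
  induction c with
  | zero => simp
  | succ k ih =>
    have h1 : a + (k+1) = (a + k) + 1 := by omega
    rw [h1, Nat.descFactorial_succ, ih, Nat.descFactorial_succ]
    have h2 : d - (a + k) = d - a - k := by omega
    rw [h2]; ring

lemma desc_mul (d y b : ℕ) (hby : b ≤ y) :
    d.descFactorial b * (d - b).descFactorial (y - b) = d.descFactorial y := by
  have := desc_add d b (y - b)
  rw [(by omega : b + (y - b) = y)] at this
  omega

lemma desc_ratio (b Q g : ℕ) (hQ : b ≤ Q) :
    Q.descFactorial b * (Q + g)^b ≤ Q^b * (Q + g).descFactorial b := by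
  rw [Nat.descFactorial_eq_prod_range, Nat.descFactorial_eq_prod_range]
  have h1 : (Q + g)^b = ∏ _i ∈ Finset.range b, (Q + g) := by
    rw [Finset.prod_const, Finset.card_range]
  have h2 : Q^b = ∏ _i ∈ Finset.range b, Q := by
    rw [Finset.prod_const, Finset.card_range]
  rw [h1, h2, ← Finset.prod_mul_distrib, ← Finset.prod_mul_distrib]
  apply Finset.prod_le_prod'
  intro i hi
  simp only [Finset.mem_range] at hi
  have hiQ : i ≤ Q := le_trans (le_of_lt hi) hQ
  have h3 : Q + g - i = (Q - i) + g := by omega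
  rw [h3, Nat.mul_add, Nat.mul_add]
  have : (Q - i) * g ≤ Q * g := Nat.mul_le_mul_right g (Nat.sub_le Q i)
  have h4 : (Q - i) * Q = Q * (Q - i) := Nat.mul_comm _ _
  omega

/-- The key analytic step. -/
lemma keystep (b m Q γ' γ : ℕ) (hb : 1 ≤ b) (hm : 2 ≤ m) (hQ : b ≤ Q)
    (hsum : Q + γ' ≤ γ) :
    (Q.descFactorial b : ℝ) / (((Q + γ').descFactorial b : ℕ) : ℝ) * Bb b (m-1) γ'
      ≤ Bb b m γ := by
  by_cases hγ' : b ≤ γ'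
  case neg =>
    have h0 : Bb b (m-1) γ' = 0 := by rw [Bb, if_neg hγ']
    rw [h0, mul_zero]
    exact Bb_nonneg b m γ hb (by omega)
  -- main case
  have hu : b ≤ Q + γ' := le_trans hQ (Nat.le_add_right _ _)
  have hγ : b ≤ γ := le_trans hu hsum
  have hγpos : (0:ℝ) < γ := by exact_mod_cast lt_of_lt_of_le (by omega : 0 < b) hγ
  have hupos : (0:ℝ) < ((Q + γ' : ℕ) : ℝ) := by exact_mod_cast lt_of_lt_of_le (by omega : 0 < b) hu
  have hγ'pos : (0:ℝ) < (γ' : ℝ) := by exact_mod_cast lt_of_lt_of_le (by omega : 0 < b) hγ'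
  -- Step A : descFactorial ratio ≤ (Q/u)^b
  have hdescpos : (0:ℝ) < (((Q + γ').descFactorial b : ℕ) : ℝ) := by exact_mod_cast desc_pos hu
  have hA : (Q.descFactorial b : ℝ) / (((Q + γ').descFactorial b : ℕ) : ℝ)
      ≤ ((Q:ℝ) / ((Q+γ' : ℕ) : ℝ))^b := by
    rw [div_le_iff₀ hdescpos, div_pow, div_mul_eq_mul_div, le_div_iff₀ (by positivity)]
    have := desc_ratio b Q γ' hQ
    calc (Q.descFactorial b : ℝ) * ((Q + γ' : ℕ):ℝ)^b
        = ((Q.descFactorial b * (Q + γ')^b : ℕ) : ℝ) := by push_cast; ring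
      _ ≤ ((Q^b * (Q + γ').descFactorial b : ℕ) : ℝ) := by exact_mod_cast this
      _ = (Q:ℝ)^b * (((Q + γ').descFactorial b : ℕ) : ℝ) := by push_cast; ring
  set a₀ : ℝ := (γ' : ℝ) / ((Q + γ' : ℕ) : ℝ) with ha₀
  have hQu : (Q:ℝ) / ((Q+γ' : ℕ) : ℝ) = 1 - a₀ := by
    rw [ha₀]; push_cast; field_simp; ring
  have ha₀mem : 0 ≤ a₀ ∧ a₀ ≤ 1 := by
    constructor
    · positivity
    · rw [ha₀, div_le_one hupos]; push_cast; linarith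
  -- reduce to the power inequality
  have hBnn : 0 ≤ Bb b (m-1) γ' := Bb_nonneg b (m-1) γ' hb (by omega)
  have hmain : (1 - a₀)^b * Bb b (m-1) γ' ≤ Bb b m γ := by
    conv_rhs => rw [Bb]
    rw [if_pos hγ]
    set xγ : ℝ := ((b:ℝ)/(γ:ℝ)) ^ ((1:ℝ)/((m:ℝ)-1)) with hxγ
    have hxγmem := rpow_base_mem hb hγ (exp_nonneg (by omega : 1 ≤ m))
    rcases Nat.lt_or_ge m 3 with hm2 | hm3
    · -- m = 2
      have hm2' : m = 2 := by omega
      subst hm2'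
      have h1 : Bb b (2-1) γ' = 1 := by
        rw [Bb, if_pos hγ']; norm_num
      rw [h1, mul_one]
      have hxγ1 : xγ = (b:ℝ)/(γ:ℝ) := by
        rw [hxγ]; norm_num
      have ha₀γ : (b:ℝ)/(γ:ℝ) ≤ a₀ := by
        rw [ha₀, div_le_div_iff₀ hγpos hupos]
        push_cast
        have h2 : (b:ℝ) ≤ (γ':ℝ) := by exact_mod_cast hγ'
        have h3 : ((Q:ℝ) + (γ':ℝ)) ≤ (γ:ℝ) := by push_cast at hsum ⊢; exact_mod_cast hsum
        nlinarith
      have : (1:ℝ) - a₀ ≤ 1 - xγ := by rw [hxγ1]; linarith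
      calc (1-a₀)^b ≤ (1-xγ)^b := by
            apply pow_le_pow_left₀ (by linarith [ha₀mem.2]) this
        _ = (1-xγ)^(b * (2-1)) := by norm_num
    · -- m ≥ 3
      set M : ℝ := (m:ℝ) with hM
      have hM3 : (3:ℝ) ≤ M := by rw [hM]; exact_mod_cast hm3
      have hM1 : (0:ℝ) < M - 1 := by linarith
      have hM2 : (0:ℝ) < M - 2 := by linarith
      set w₁ : ℝ := 1/(M-1) with hw₁
      set w₂ : ℝ := (M-2)/(M-1) with hw₂
      have hw₁pos : 0 < w₁ := by positivity
      have hw₂pos : 0 < w₂ := by positivity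
      have hwsum : w₁ + w₂ = 1 := by rw [hw₁, hw₂]; field_simp; ring
      set a₁ : ℝ := ((b:ℝ)/(γ':ℝ)) ^ ((1:ℝ)/(M-2)) with ha₁
      have ha₁mem : 0 ≤ a₁ ∧ a₁ ≤ 1 := rpow_base_mem hb hγ' (by positivity)
      have hBb' : Bb b (m-1) γ' = (1 - a₁) ^ (b * (m-1-1)) := by
        rw [Bb, if_pos hγ', ha₁]
        congr 2
        have : ((m-1 : ℕ) : ℝ) = M - 1 := by
          rw [hM]; push_cast [Nat.cast_sub (by omega : 1 ≤ m)]; ring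
        rw [this]; ring_nf
      rw [hBb']
      -- the geometric mean P
      set P : ℝ := (1-a₀)^w₁ * (1-a₁)^w₂ with hP
      have hPnn : 0 ≤ P := by
        apply mul_nonneg <;> apply Real.rpow_nonneg
        · linarith [ha₀mem.2]
        · linarith [ha₁mem.2]
      have hg1 : P ≤ w₁ * (1-a₀) + w₂ * (1-a₁) :=
        Real.geom_mean_le_arith_mean2_weighted (le_of_lt hw₁pos) (le_of_lt hw₂pos)
          (by linarith [ha₀mem.2]) (by linarith [ha₁mem.2]) hwsum
      have hg2 : a₀^w₁ * a₁^w₂ ≤ w₁ * a₀ + w₂ * a₁ :=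
        Real.geom_mean_le_arith_mean2_weighted (le_of_lt hw₁pos) (le_of_lt hw₂pos)
          ha₀mem.1 ha₁mem.1 hwsum
      have hPle : P ≤ 1 - a₀^w₁ * a₁^w₂ := by
        have hexp : w₁ * (1-a₀) + w₂ * (1-a₁) = (w₁ + w₂) - (w₁ * a₀ + w₂ * a₁) := by ring
        rw [hwsum] at hexp
        linarith
      -- identify the geometric mean of a's
      have ha₁w₂ : a₁^w₂ = ((b:ℝ)/(γ':ℝ))^w₁ := by
        rw [ha₁, ← Real.rpow_mul (by positivity)]
        congr 1
        rw [hw₁, hw₂]; field_simp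
      have hgm : a₀^w₁ * a₁^w₂ = ((b:ℝ)/((Q+γ' : ℕ):ℝ))^w₁ := by
        rw [ha₁w₂, ← Real.mul_rpow ha₀mem.1 (by positivity)]
        congr 1
        rw [ha₀]; field_simp
      have hgmge : xγ ≤ a₀^w₁ * a₁^w₂ := by
        rw [hgm, hxγ]
        apply Real.rpow_le_rpow (by positivity) _ (le_of_lt hw₁pos)
        apply div_le_div_of_nonneg_left (by positivity) hupos
        exact_mod_cast hsum
      have hPle2 : P ≤ 1 - xγ := by linarith
      -- raise to the power b*(m-1)
      have hc1 : w₁ * ((b * (m-1) : ℕ) : ℝ) = (b:ℝ) := by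
        rw [hw₁]
        push_cast [Nat.cast_sub (by omega : 1 ≤ m)]
        rw [hM]
        have hm1 : (m:ℝ) - 1 ≠ 0 := by rw [← hM]; exact hM1.ne'
        field_simp
      have hc2 : w₂ * ((b * (m-1) : ℕ) : ℝ) = ((b * (m-1-1) : ℕ) : ℝ) := by
        rw [hw₂]
        push_cast [Nat.cast_sub (by omega : 1 ≤ m), Nat.cast_sub (by omega : 1 ≤ m - 1)]
        rw [hM]
        have hm1 : (m:ℝ) - 1 ≠ 0 := by rw [← hM]; exact hM1.ne'
        field_simp
        ring
      have hfin : P ^ ((b * (m-1) : ℕ) : ℝ) = ((1-a₀)^b * (1-a₁)^(b*(m-1-1)) : ℝ) := by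
        rw [hP, Real.mul_rpow (Real.rpow_nonneg (by linarith [ha₀mem.2]) _)
            (Real.rpow_nonneg (by linarith [ha₁mem.2]) _),
          ← Real.rpow_mul (by linarith [ha₀mem.2]), ← Real.rpow_mul (by linarith [ha₁mem.2]),
          hc1, hc2]
        rw [show ((b:ℝ) = ((b : ℕ) : ℝ)) from rfl, Real.rpow_natCast, Real.rpow_natCast]
      rw [← hfin]
      calc P ^ ((b * (m-1) : ℕ) : ℝ) ≤ (1 - xγ) ^ ((b * (m-1) : ℕ) : ℝ) := by
            apply Real.rpow_le_rpow hPnn hPle2 (by positivity)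
        _ = (1 - xγ) ^ (b * (m-1)) := Real.rpow_natCast _ _
  calc (Q.descFactorial b : ℝ) / (((Q + γ').descFactorial b : ℕ) : ℝ) * Bb b (m-1) γ'
      ≤ ((Q:ℝ) / ((Q+γ' : ℕ) : ℝ))^b * Bb b (m-1) γ' := by
        exact mul_le_mul_of_nonneg_right hA hBnn
    _ = (1 - a₀)^b * Bb b (m-1) γ' := by rw [hQu]
    _ ≤ Bb b m γ := hmain


variable {n : ℕ}

/-- rank of `x`'s value among the values of `Z` -/
def rk (Z : Finset (Fin n)) (ρ : Equiv.Perm (Fin n)) (x : Fin n) : ℕ :=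
  (Z.filter (fun z' => ρ z' < ρ x)).card

lemma rk_lt {Z : Finset (Fin n)} {ρ : Equiv.Perm (Fin n)} {x : Fin n} (hx : x ∈ Z) :
    rk Z ρ x < Z.card := by
  apply card_lt_card
  rw [Finset.filter_ssubset]
  exact ⟨x, hx, lt_irrefl _⟩

lemma rk_lt_rk {Z : Finset (Fin n)} {ρ : Equiv.Perm (Fin n)} {x x' : Fin n}
    (hx : x ∈ Z) : rk Z ρ x < rk Z ρ x' ↔ ρ x < ρ x' := by
  constructor
  · intro h
    by_contra hc
    push_neg at hc
    have : rk Z ρ x' ≤ rk Z ρ x := by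
      apply card_le_card
      intro z hz
      rw [mem_filter] at hz ⊢
      exact ⟨hz.1, lt_of_lt_of_le hz.2 hc⟩
    omega
  · intro h
    apply card_lt_card
    constructor
    · intro z hz
      rw [mem_filter] at hz ⊢
      exact ⟨hz.1, lt_trans hz.2 h⟩
    · intro hsub
      have := hsub (mem_filter.mpr ⟨hx, h⟩)
      rw [mem_filter] at this
      exact lt_irrefl _ this.2

lemma rk_inj {Z : Finset (Fin n)} {ρ : Equiv.Perm (Fin n)} {x x' : Fin n}
    (hx : x ∈ Z) (hx' : x' ∈ Z) (h : rk Z ρ x = rk Z ρ x') : x = x' := by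
  by_contra hne
  have hρ : ρ x ≠ ρ x' := fun hc => hne (ρ.injective hc)
  rcases lt_trichotomy (ρ x) (ρ x') with hlt | heq | hgt
  · have := (rk_lt_rk hx).mpr hlt; omega
  · exact hρ heq
  · have := (rk_lt_rk hx').mpr hgt; omega

/-- generic version of rank injectivity on a finset of values -/
lemma rankW_lt {W : Finset (Fin n)} {w w' : Fin n} (hw : w ∈ W) (h : w < w') :
    (W.filter (· < w)).card < (W.filter (· < w')).card := by
  apply card_lt_card
  constructor
  · intro z hz
    rw [mem_filter] at hz ⊢
    exact ⟨hz.1, lt_trans hz.2 h⟩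
  · intro hsub
    have := hsub (mem_filter.mpr ⟨hw, h⟩)
    rw [mem_filter] at this
    exact lt_irrefl _ this.2

lemma rankW_inj {W : Finset (Fin n)} {w w' : Fin n} (hw : w ∈ W) (hw' : w' ∈ W)
    (h : (W.filter (· < w)).card = (W.filter (· < w')).card) : w = w' := by
  rcases lt_trichotomy w w' with hlt | heq | hgt
  · have := rankW_lt hw hlt; omega
  · exact heq
  · have := rankW_lt hw' hgt; omega

lemma rank_orderIsoOfFin (W : Finset (Fin n)) {k : ℕ} (h : W.card = k) (j : Fin k) :
    (W.filter (fun w => w < (W.orderIsoOfFin h j : Fin n))).card = (j : ℕ) := by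
  set e := W.orderIsoOfFin h with he
  have himg : W.filter (fun w => w < (e j : Fin n))
      = (Finset.univ.filter (fun i : Fin k => i < j)).image (fun i => (e i : Fin n)) := by
    ext w
    simp only [mem_filter, mem_image, Finset.mem_univ, true_and]
    constructor
    · rintro ⟨hwW, hwlt⟩
      refine ⟨e.symm ⟨w, hwW⟩, ?_, ?_⟩
      · rw [← OrderIso.lt_iff_lt e, OrderIso.apply_symm_apply]
        exact Subtype.mk_lt_mk.mpr hwlt
      · rw [OrderIso.apply_symm_apply]
    · rintro ⟨i, hij, hiw⟩
      constructor
      · rw [← hiw]; exact (e i).2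
      · rw [← hiw]
        exact Subtype.coe_lt_coe.mpr (e.lt_iff_lt.mpr hij)
  rw [himg, card_image_of_injective _ (fun a a' haa => e.injective (Subtype.coe_injective haa))]
  have : (Finset.univ.filter (fun i : Fin k => i < j)) = Finset.Iio j := by ext i; simp
  rw [this, Fin.card_Iio]

/-- the fiber invariant: values off `Y ∪ Z`, and relative ranks on `Z` -/
def Xi (Y Z : Finset (Fin n)) (ρ : Equiv.Perm (Fin n)) : (Fin n → Option (Fin n)) × (Fin n → ℕ) :=
  (fun x => if x ∈ Y ∪ Z then none else some (ρ x),
   fun x => if x ∈ Z then rk Z ρ x else 0)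

lemma Xi_offD {Y Z : Finset (Fin n)} {ρ σ : Equiv.Perm (Fin n)} (h : Xi Y Z ρ = Xi Y Z σ)
    {x : Fin n} (hx : x ∉ Y ∪ Z) : ρ x = σ x := by
  have := congrFun (congrArg Prod.fst h) x
  simp only [Xi, if_neg hx] at this
  exact Option.some_injective _ this

lemma Xi_rk {Y Z : Finset (Fin n)} {ρ σ : Equiv.Perm (Fin n)} (h : Xi Y Z ρ = Xi Y Z σ)
    {x : Fin n} (hx : x ∈ Z) : rk Z ρ x = rk Z σ x := by
  have := congrFun (congrArg Prod.snd h) x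
  simpa only [Xi, if_pos hx] using this

lemma image_eq_filter_symm (D : Finset (Fin n)) (ρ : Equiv.Perm (Fin n)) :
    D.image ρ = Finset.univ.filter (fun v => ρ.symm v ∈ D) := by
  ext v
  simp only [mem_image, mem_filter, Finset.mem_univ, true_and]
  constructor
  · rintro ⟨x, hx, rfl⟩; simpa using hx
  · intro hv; exact ⟨ρ.symm v, hv, by simp⟩

lemma Xi_image {Y Z : Finset (Fin n)} {ρ σ : Equiv.Perm (Fin n)} (h : Xi Y Z ρ = Xi Y Z σ) :
    (Y ∪ Z).image ρ = (Y ∪ Z).image σ := by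
  rw [image_eq_filter_symm, image_eq_filter_symm]
  apply filter_congr
  intro v _
  constructor
  · intro hv
    by_contra hc
    have h1 : σ (σ.symm v) = v := by simp
    have h2 : ρ (σ.symm v) = σ (σ.symm v) := Xi_offD h hc
    have : ρ.symm v = σ.symm v := by
      apply ρ.injective; simp [h2, h1]
    rw [this] at hv; exact hc hv
  · intro hv
    by_contra hc
    have h1 : ρ (ρ.symm v) = v := by simp
    have h2 : ρ (ρ.symm v) = σ (ρ.symm v) := Xi_offD h hc
    have : σ.symm v = ρ.symm v := by
      apply σ.injective; simp [← h2, h1]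
    rw [this] at hv; exact hc hv

section Build

variable (Y Z : Finset (Fin n)) (ρ₀ : Equiv.Perm (Fin n))

/-- the common value set of the fiber -/
def Vst : Finset (Fin n) := (Y ∪ Z).image ρ₀

lemma Vst_card : (Vst Y Z ρ₀).card = (Y ∪ Z).card :=
  card_image_of_injective _ ρ₀.injective

variable {Y Z ρ₀}

/-- image finset of an embedding `↥Y ↪ ↥V` -/
def Iphi (φ : {x // x ∈ Y} ↪ {v // v ∈ Vst Y Z ρ₀}) : Finset (Fin n) :=
  Y.attach.image (fun a => ((φ a : {v // v ∈ Vst Y Z ρ₀}) : Fin n))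

lemma Iphi_card (φ : {x // x ∈ Y} ↪ {v // v ∈ Vst Y Z ρ₀}) : (Iphi φ).card = Y.card := by
  rw [Iphi, card_image_of_injective _ (fun a a' haa => φ.injective (Subtype.coe_injective haa)),
    card_attach]

lemma Iphi_subset (φ : {x // x ∈ Y} ↪ {v // v ∈ Vst Y Z ρ₀}) : Iphi φ ⊆ Vst Y Z ρ₀ := by
  intro v hv
  rw [Iphi, mem_image] at hv
  obtain ⟨a, _, rfl⟩ := hv
  exact (φ a).2

lemma mem_Iphi {φ : {x // x ∈ Y} ↪ {v // v ∈ Vst Y Z ρ₀}} {x : Fin n} (hx : x ∈ Y) :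
    ((φ ⟨x, hx⟩ : {v // v ∈ Vst Y Z ρ₀}) : Fin n) ∈ Iphi φ := by
  rw [Iphi, mem_image]
  exact ⟨⟨x, hx⟩, mem_attach _ _, rfl⟩

/-- remaining values -/
def Wphi (φ : {x // x ∈ Y} ↪ {v // v ∈ Vst Y Z ρ₀}) : Finset (Fin n) :=
  Vst Y Z ρ₀ \ Iphi φ

lemma Wphi_card (hYZ : Disjoint Y Z) (φ : {x // x ∈ Y} ↪ {v // v ∈ Vst Y Z ρ₀}) :
    (Wphi φ).card = Z.card := by
  rw [Wphi, card_sdiff_of_subset (Iphi_subset φ), Vst_card, Iphi_card,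
    card_union_of_disjoint hYZ]
  omega

/-- the permutation built from an embedding: `φ` on `Y`, rank-matching on `Z`, `ρ₀` elsewhere -/
noncomputable def bld (hYZ : Disjoint Y Z) (φ : {x // x ∈ Y} ↪ {v // v ∈ Vst Y Z ρ₀}) :
    Fin n → Fin n := fun x =>
  if hx : x ∈ Y then (φ ⟨x, hx⟩ : Fin n)
  else if hz : x ∈ Z then
    ((Wphi φ).orderIsoOfFin (Wphi_card hYZ φ) ⟨rk Z ρ₀ x, rk_lt hz⟩ : Fin n)
  else ρ₀ x

lemma bld_on_Y (hYZ : Disjoint Y Z) (φ : {x // x ∈ Y} ↪ {v // v ∈ Vst Y Z ρ₀})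
    {x : Fin n} (hx : x ∈ Y) : bld hYZ φ x = (φ ⟨x, hx⟩ : Fin n) := by
  rw [bld, dif_pos hx]

lemma bld_on_Z (hYZ : Disjoint Y Z) (φ : {x // x ∈ Y} ↪ {v // v ∈ Vst Y Z ρ₀})
    {x : Fin n} (hz : x ∈ Z) :
    bld hYZ φ x = ((Wphi φ).orderIsoOfFin (Wphi_card hYZ φ) ⟨rk Z ρ₀ x, rk_lt hz⟩ : Fin n) := by
  have hx : x ∉ Y := fun hc => (Finset.disjoint_left.mp hYZ) hc hz
  rw [bld, dif_neg hx, dif_pos hz]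

lemma bld_off (hYZ : Disjoint Y Z) (φ : {x // x ∈ Y} ↪ {v // v ∈ Vst Y Z ρ₀})
    {x : Fin n} (hx : x ∉ Y ∪ Z) : bld hYZ φ x = ρ₀ x := by
  rw [mem_union] at hx
  push_neg at hx
  rw [bld, dif_neg hx.1, dif_neg hx.2]

lemma bld_mem_W (hYZ : Disjoint Y Z) (φ : {x // x ∈ Y} ↪ {v // v ∈ Vst Y Z ρ₀})
    {x : Fin n} (hz : x ∈ Z) : bld hYZ φ x ∈ Wphi φ := by
  rw [bld_on_Z hYZ φ hz]
  exact ((Wphi φ).orderIsoOfFin (Wphi_card hYZ φ) _).2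

lemma mem_Vst_iff {v : Fin n} : v ∈ Vst Y Z ρ₀ ↔ ρ₀.symm v ∈ Y ∪ Z := by
  rw [Vst, image_eq_filter_symm, mem_filter]
  simp

lemma bld_inj (hYZ : Disjoint Y Z) (φ : {x // x ∈ Y} ↪ {v // v ∈ Vst Y Z ρ₀}) :
    Function.Injective (bld hYZ φ) := by
  intro x x' h
  have offmem : ∀ u : Fin n, u ∉ Y ∪ Z → ρ₀ u ∉ Vst Y Z ρ₀ := by
    intro u hu hc
    rw [mem_Vst_iff] at hc
    simp only [Equiv.symm_apply_apply] at hc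
    exact hu hc
  by_cases hx : x ∈ Y <;> by_cases hx' : x' ∈ Y
  · -- both in Y
    rw [bld_on_Y hYZ φ hx, bld_on_Y hYZ φ hx'] at h
    have := φ.injective (Subtype.coe_injective h)
    exact congrArg Subtype.val this
  · -- x ∈ Y, x' ∉ Y
    exfalso
    rw [bld_on_Y hYZ φ hx] at h
    by_cases hz' : x' ∈ Z
    · have h1 : bld hYZ φ x' ∈ Wphi φ := bld_mem_W hYZ φ hz'
      rw [← h] at h1
      rw [Wphi, mem_sdiff] at h1
      exact h1.2 (mem_Iphi hx)
    · rw [bld_off hYZ φ (by simp [hx', hz'])] at h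
      have h1 : ρ₀ x' ∉ Vst Y Z ρ₀ := offmem x' (by simp [hx', hz'])
      rw [← h] at h1
      exact h1 (Iphi_subset φ (mem_Iphi hx))
  · -- x ∉ Y, x' ∈ Y
    exfalso
    rw [bld_on_Y hYZ φ hx'] at h
    by_cases hz : x ∈ Z
    · have h1 : bld hYZ φ x ∈ Wphi φ := bld_mem_W hYZ φ hz
      rw [h] at h1
      rw [Wphi, mem_sdiff] at h1
      exact h1.2 (mem_Iphi hx')
    · rw [bld_off hYZ φ (by simp [hx, hz])] at h
      have h1 : ρ₀ x ∉ Vst Y Z ρ₀ := offmem x (by simp [hx, hz])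
      rw [h] at h1
      exact h1 (Iphi_subset φ (mem_Iphi hx'))
  · -- neither in Y
    by_cases hz : x ∈ Z <;> by_cases hz' : x' ∈ Z
    · -- both in Z
      rw [bld_on_Z hYZ φ hz, bld_on_Z hYZ φ hz'] at h
      have h2 := ((Wphi φ).orderIsoOfFin (Wphi_card hYZ φ)).injective
        (Subtype.coe_injective h)
      have h3 : rk Z ρ₀ x = rk Z ρ₀ x' := by
        have := congrArg Fin.val h2
        simpa using this
      exact rk_inj hz hz' h3
    · exfalso
      have h1 : bld hYZ φ x ∈ Wphi φ := bld_mem_W hYZ φ hz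
      rw [bld_off hYZ φ (x := x') (by simp [hx', hz'])] at h
      rw [h] at h1
      exact offmem x' (by simp [hx', hz']) (sdiff_subset h1)
    · exfalso
      have h1 : bld hYZ φ x' ∈ Wphi φ := bld_mem_W hYZ φ hz'
      rw [bld_off hYZ φ (by simp [hx, hz])] at h
      rw [← h] at h1
      exact offmem x (by simp [hx, hz]) (sdiff_subset h1)
    · rw [bld_off hYZ φ (x := x) (by simp [hx, hz]), bld_off hYZ φ (x := x') (by simp [hx', hz'])] at h
      exact ρ₀.injective h

noncomputable def bldPerm (hYZ : Disjoint Y Z) (φ : {x // x ∈ Y} ↪ {v // v ∈ Vst Y Z ρ₀}) :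
    Equiv.Perm (Fin n) :=
  Equiv.ofBijective (bld hYZ φ) (Finite.injective_iff_bijective.mp (bld_inj hYZ φ))

lemma bldPerm_apply (hYZ : Disjoint Y Z) (φ : {x // x ∈ Y} ↪ {v // v ∈ Vst Y Z ρ₀})
    (x : Fin n) : bldPerm hYZ φ x = bld hYZ φ x := rfl

lemma bldPerm_fiber (hYZ : Disjoint Y Z) (φ : {x // x ∈ Y} ↪ {v // v ∈ Vst Y Z ρ₀}) :
    Xi Y Z (bldPerm hYZ φ) = Xi Y Z ρ₀ := by
  unfold Xi
  refine Prod.ext ?_ ?_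
  · funext x
    by_cases hx : x ∈ Y ∪ Z
    · simp [hx]
    · simp only [if_neg hx]
      rw [bldPerm_apply, bld_off hYZ φ hx]
  · funext x
    by_cases hx : x ∈ Z
    · simp only [if_pos hx]
      unfold rk
      congr 1
      apply filter_congr
      intro z hz
      rw [bldPerm_apply, bldPerm_apply, bld_on_Z hYZ φ hz, bld_on_Z hYZ φ hx]
      rw [Subtype.coe_lt_coe, OrderIso.lt_iff_lt, Fin.mk_lt_mk]
      exact rk_lt_rk hz
    · simp [hx]

/-- the restriction of a fiber element to `Y`, as an embedding -/
def toEmb (ρ : Equiv.Perm (Fin n)) (h : Xi Y Z ρ = Xi Y Z ρ₀) :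
    {x // x ∈ Y} ↪ {v // v ∈ Vst Y Z ρ₀} :=
  ⟨fun a => ⟨ρ a, by
      rw [Vst, ← Xi_image h]
      exact mem_image_of_mem _ (mem_union_left _ a.2)⟩,
   fun a a' haa => Subtype.ext (ρ.injective (congrArg Subtype.val haa))⟩

lemma Iphi_toEmb {ρ : Equiv.Perm (Fin n)} (h : Xi Y Z ρ = Xi Y Z ρ₀) :
    Iphi (toEmb ρ h) = Y.image ρ := by
  ext v
  simp only [Iphi, toEmb, mem_image, Function.Embedding.coeFn_mk]
  constructor
  · rintro ⟨a, _, rfl⟩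
    exact ⟨a.1, a.2, rfl⟩
  · rintro ⟨x, hx, rfl⟩
    exact ⟨⟨x, hx⟩, mem_attach _ _, rfl⟩

lemma Wphi_toEmb (hYZ : Disjoint Y Z) {ρ : Equiv.Perm (Fin n)} (h : Xi Y Z ρ = Xi Y Z ρ₀) :
    Wphi (toEmb ρ h) = Z.image ρ := by
  rw [Wphi, Iphi_toEmb, Vst, ← Xi_image h]
  ext v
  simp only [mem_sdiff, mem_image]
  constructor
  · rintro ⟨⟨x, hx, rfl⟩, hnot⟩
    rw [mem_union] at hx
    rcases hx with hx | hx
    · exact absurd ⟨x, hx, rfl⟩ hnot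
    · exact ⟨x, hx, rfl⟩
  · rintro ⟨z, hz, rfl⟩
    refine ⟨⟨z, mem_union_right _ hz, rfl⟩, ?_⟩
    rintro ⟨y, hy, hyz⟩
    have : y = z := ρ.injective hyz
    subst this
    exact (Finset.disjoint_left.mp hYZ) hy hz

lemma bld_toEmb (hYZ : Disjoint Y Z) {ρ : Equiv.Perm (Fin n)} (h : Xi Y Z ρ = Xi Y Z ρ₀) :
    bldPerm hYZ (toEmb ρ h) = ρ := by
  apply Equiv.ext
  intro x
  rw [bldPerm_apply]
  by_cases hx : x ∈ Y
  · rw [bld_on_Y hYZ _ hx]; rfl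
  by_cases hz : x ∈ Z
  · rw [bld_on_Z hYZ _ hz]
    set W := Wphi (toEmb ρ h) with hW
    have hWZ : W = Z.image ρ := Wphi_toEmb hYZ h
    have hmem1 : ((W.orderIsoOfFin (Wphi_card hYZ (toEmb ρ h)) ⟨rk Z ρ₀ x, rk_lt hz⟩ : {v // v ∈ W}) : Fin n) ∈ W :=
      (W.orderIsoOfFin _ _).2
    have hmem2 : ρ x ∈ W := by
      rw [hWZ]; exact mem_image_of_mem _ hz
    apply rankW_inj hmem1 hmem2
    rw [rank_orderIsoOfFin]
    have hfilt : W.filter (· < ρ x) = (Z.filter (fun z => ρ z < ρ x)).image ρ := by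
      rw [hWZ]
      ext v
      simp only [mem_filter, mem_image]
      constructor
      · rintro ⟨⟨z, hzZ, rfl⟩, hlt⟩
        exact ⟨z, ⟨hzZ, hlt⟩, rfl⟩
      · rintro ⟨z, ⟨hzZ, hlt⟩, rfl⟩
        exact ⟨⟨z, hzZ, rfl⟩, hlt⟩
    rw [hfilt, card_image_of_injective _ ρ.injective]
    exact (Xi_rk h hz).symm
  · rw [bld_off hYZ _ (by simp [hx, hz])]
    exact (Xi_offD h (by simp [hx, hz])).symm

/-- the fiber cardinality -/
theorem fiber_card (hYZ : Disjoint Y Z) (ρ₀ : Equiv.Perm (Fin n)) :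
    (univ.filter (fun ρ : Equiv.Perm (Fin n) => Xi Y Z ρ = Xi Y Z ρ₀)).card
      = ((Y ∪ Z).card).descFactorial Y.card := by
  have e : {ρ : Equiv.Perm (Fin n) // Xi Y Z ρ = Xi Y Z ρ₀}
      ≃ ({x // x ∈ Y} ↪ {v // v ∈ Vst Y Z ρ₀}) :=
    { toFun := fun ρ => toEmb ρ.1 ρ.2
      invFun := fun φ => ⟨bldPerm hYZ φ, bldPerm_fiber hYZ φ⟩
      left_inv := fun ρ => Subtype.ext (bld_toEmb hYZ ρ.2)
      right_inv := fun φ => by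
        refine DFunLike.ext _ _ (fun a => Subtype.ext ?_)
        show ((bldPerm hYZ φ) a : Fin n) = (φ a : Fin n)
        rw [bldPerm_apply, bld_on_Y hYZ φ a.2] }
  have h1 : (univ.filter (fun ρ : Equiv.Perm (Fin n) => Xi Y Z ρ = Xi Y Z ρ₀)).card
      = Fintype.card {ρ : Equiv.Perm (Fin n) // Xi Y Z ρ = Xi Y Z ρ₀} :=
    (Fintype.card_subtype _).symm
  rw [h1, Fintype.card_congr e, Fintype.card_embedding_eq, Fintype.card_coe, Fintype.card_coe,
    Vst_card]

end Build

section FiberA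

lemma rankW_lt_iff {W : Finset (Fin n)} {w w' : Fin n} (hw : w ∈ W) (hw' : w' ∈ W) :
    (W.filter (· < w)).card < (W.filter (· < w')).card ↔ w < w' := by
  constructor
  · intro h
    rcases lt_trichotomy w w' with hlt | heq | hgt
    · exact hlt
    · subst heq; omega
    · have := rankW_lt hw' hgt; omega
  · exact rankW_lt hw

/-- the set of the `b` smallest elements of a finset -/
def botSet (b : ℕ) (W : Finset (Fin n)) : Finset (Fin n) :=
  W.filter (fun v => (W.filter (· < v)).card < b)

lemma card_filter_val_lt (d b : ℕ) (hbd : b ≤ d) :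
    ((Finset.univ : Finset (Fin d)).filter (fun i : Fin d => (i : ℕ) < b)).card = b := by
  have himg : ((Finset.univ : Finset (Fin d)).filter (fun i : Fin d => (i : ℕ) < b)).image Fin.val
      = Finset.range b := by
    ext k
    simp only [Finset.mem_image, mem_filter, Finset.mem_univ, true_and, Finset.mem_range]
    constructor
    · rintro ⟨i, hi, rfl⟩; exact hi
    · intro hk; exact ⟨⟨k, lt_of_lt_of_le hk hbd⟩, hk, rfl⟩
  have h2 := card_image_of_injective
    ((Finset.univ : Finset (Fin d)).filter (fun i : Fin d => (i : ℕ) < b)) Fin.val_injective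
  rw [himg, Finset.card_range] at h2
  omega

lemma botSet_card (b : ℕ) {W : Finset (Fin n)} {d : ℕ} (h : W.card = d) (hbd : b ≤ d) :
    (botSet b W).card = b := by
  set e := W.orderIsoOfFin h with he
  have himg : botSet b W
      = (Finset.univ.filter (fun i : Fin d => (i : ℕ) < b)).image (fun i => (e i : Fin n)) := by
    ext w
    simp only [botSet, mem_filter, mem_image, Finset.mem_univ, true_and]
    constructor
    · rintro ⟨hwW, hwlt⟩
      refine ⟨e.symm ⟨w, hwW⟩, ?_, ?_⟩
      · have h1 := rank_orderIsoOfFin W h (e.symm ⟨w, hwW⟩)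
        rw [OrderIso.apply_symm_apply] at h1
        have h2 : (W.filter (fun x => x < w)).card = ((e.symm ⟨w, hwW⟩ : Fin d) : ℕ) := by
          simpa using h1
        omega
      · rw [OrderIso.apply_symm_apply]
    · rintro ⟨i, hib, rfl⟩
      refine ⟨(e i).2, ?_⟩
      rw [rank_orderIsoOfFin W h i]
      exact hib
  rw [himg, card_image_of_injective _ (fun a a' haa => e.injective (Subtype.coe_injective haa))]
  exact card_filter_val_lt d b hbd

lemma mem_botSet {b : ℕ} {W : Finset (Fin n)} {v : Fin n} :
    v ∈ botSet b W ↔ v ∈ W ∧ (W.filter (· < v)).card < b := by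
  simp [botSet]

variable {Y Z : Finset (Fin n)} {ρ₀ : Equiv.Perm (Fin n)}

/-- characterization of the low-elements condition on a fiber -/
lemma Achar (b : ℕ) (hYZ : Disjoint Y Z) (hby : b ≤ Y.card) {ρ : Equiv.Perm (Fin n)}
    (h : Xi Y Z ρ = Xi Y Z ρ₀) :
    b ≤ (Y.filter (fun x => ∀ z ∈ Z, ρ x < ρ z)).card
      ↔ botSet b (Vst Y Z ρ₀) ⊆ Y.image ρ := by
  have hV : Vst Y Z ρ₀ = (Y ∪ Z).image ρ := (Xi_image h).symm
  constructor
  · intro hA t ht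
    rw [mem_botSet] at ht
    obtain ⟨htV, htrk⟩ := ht
    rw [hV, mem_image] at htV
    obtain ⟨u, hu, rfl⟩ := htV
    rw [mem_union] at hu
    rcases hu with hu | hu
    · exact mem_image_of_mem _ hu
    · -- u ∈ Z : contradiction with the rank bound
      exfalso
      have hsub : (Y.filter (fun x => ∀ z ∈ Z, ρ x < ρ z)).image ρ
          ⊆ (Vst Y Z ρ₀).filter (· < ρ u) := by
        intro v hv
        rw [mem_image] at hv
        obtain ⟨x, hx, rfl⟩ := hv
        rw [mem_filter] at hx ⊢
        exact ⟨by rw [hV]; exact mem_image_of_mem _ (mem_union_left _ hx.1), hx.2 u hu⟩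
      have hcard := card_le_card hsub
      rw [card_image_of_injective _ ρ.injective] at hcard
      omega
  · intro hT
    have hsub : (botSet b (Vst Y Z ρ₀)).image ρ.symm
        ⊆ Y.filter (fun x => ∀ z ∈ Z, ρ x < ρ z) := by
      intro x hx
      rw [mem_image] at hx
      obtain ⟨t, ht, rfl⟩ := hx
      have htY := hT ht
      rw [mem_image] at htY
      obtain ⟨y, hy, rfl⟩ := htY
      rw [mem_filter]
      simp only [Equiv.symm_apply_apply]
      refine ⟨hy, ?_⟩
      intro z hz
      rw [mem_botSet] at ht
      -- ρ y ∈ botSet, ρ z ∉ botSet (else z ∈ Y), so ρ y < ρ z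
      have hzV : ρ z ∈ Vst Y Z ρ₀ := by
        rw [hV]; exact mem_image_of_mem _ (mem_union_right _ hz)
      have hznot : ¬ ((Vst Y Z ρ₀).filter (· < ρ z)).card < b := by
        intro hc
        have : ρ z ∈ Y.image ρ := hT (mem_botSet.mpr ⟨hzV, hc⟩)
        rw [mem_image] at this
        obtain ⟨y', hy', hy'z⟩ := this
        have : y' = z := ρ.injective hy'z
        subst this
        exact (Finset.disjoint_left.mp hYZ) hy' hz
      push_neg at hznot
      have hlt : ((Vst Y Z ρ₀).filter (· < ρ y)).card
          < ((Vst Y Z ρ₀).filter (· < ρ z)).card := by omega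
      exact (rankW_lt_iff ht.1 hzV).mp hlt
    have := card_le_card hsub
    rw [card_image_of_injective _ ρ.symm.injective] at this
    have hbot := botSet_card b (Vst_card Y Z ρ₀)
      (le_trans hby (card_le_card subset_union_left))
    omega

lemma Xi_anti_mono {Y' : Finset (Fin n)} (hY' : Y' ⊆ Y) {ρ σ : Equiv.Perm (Fin n)}
    (h : Xi Y' Z ρ = Xi Y' Z σ) : Xi Y Z ρ = Xi Y Z σ := by
  unfold Xi
  refine Prod.ext ?_ ?_
  · funext x
    by_cases hx : x ∈ Y ∪ Z
    · simp [hx]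
    · have hx' : x ∉ Y' ∪ Z := by
        rw [mem_union] at hx ⊢
        push_neg at hx ⊢
        exact ⟨fun hc => hx.1 (hY' hc), hx.2⟩
      simp only [if_neg hx]
      rw [Xi_offD h hx']
  · funext x
    by_cases hx : x ∈ Z
    · simp only [if_pos hx]
      exact Xi_rk h hx
    · simp [hx]

lemma desc_add' (d a : ℕ) : ∀ c, d.descFactorial (a + c) = d.descFactorial a * (d - a).descFactorial c := by
  intro c
  induction c with
  | zero => simp
  | succ k ih =>
    have h1 : a + (k+1) = (a + k) + 1 := by omega
    rw [h1, Nat.descFactorial_succ, ih, Nat.descFactorial_succ]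
    have h2 : d - (a + k) = d - a - k := by omega
    rw [h2]; ring

lemma desc_mul' (d y b : ℕ) (hby : b ≤ y) :
    d.descFactorial b * (d - b).descFactorial (y - b) = d.descFactorial y := by
  have := desc_add' d b (y - b)
  rw [(by omega : b + (y - b) = y)] at this
  omega

theorem fiberA_card (b : ℕ) (hb : 1 ≤ b) (hYZ : Disjoint Y Z) (ρ₀ : Equiv.Perm (Fin n)) :
    (univ.filter (fun ρ : Equiv.Perm (Fin n) =>
        (b ≤ (Y.filter (fun x => ∀ z ∈ Z, ρ x < ρ z)).card) ∧ Xi Y Z ρ = Xi Y Z ρ₀)).card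
        * ((Y ∪ Z).card.descFactorial b)
      ≤ Y.card.descFactorial b
        * (univ.filter (fun ρ : Equiv.Perm (Fin n) => Xi Y Z ρ = Xi Y Z ρ₀)).card := by
  by_cases hby : b ≤ Y.card
  case neg =>
    have hempty : (univ.filter (fun ρ : Equiv.Perm (Fin n) =>
        (b ≤ (Y.filter (fun x => ∀ z ∈ Z, ρ x < ρ z)).card) ∧ Xi Y Z ρ = Xi Y Z ρ₀)) = ∅ := by
      rw [Finset.filter_eq_empty_iff]
      rintro ρ _ ⟨hA, _⟩
      have : (Y.filter (fun x => ∀ z ∈ Z, ρ x < ρ z)).card ≤ Y.card :=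
        card_le_card (filter_subset _ _)
      omega
    rw [hempty]
    simp
  -- main case : b ≤ Y.card
  set TV := botSet b (Vst Y Z ρ₀) with hTV
  have hTVcard : TV.card = b :=
    botSet_card b (Vst_card Y Z ρ₀) (le_trans hby (card_le_card subset_union_left))
  set FA := univ.filter (fun ρ : Equiv.Perm (Fin n) =>
      (b ≤ (Y.filter (fun x => ∀ z ∈ Z, ρ x < ρ z)).card) ∧ Xi Y Z ρ = Xi Y Z ρ₀) with hFA
  set μ : Equiv.Perm (Fin n) → (Fin n → Fin n) :=
    fun ρ => (fun v => if v ∈ TV then ρ.symm v else v) with hμ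
  -- decompose FA along μ
  have hdecomp : FA.card = ∑ g ∈ FA.image μ, (FA.filter (fun ρ => μ ρ = g)).card :=
    card_eq_sum_card_fiberwise (fun ρ hρ => mem_image_of_mem μ hρ)
  -- each fiber of μ is an `Xi Y' Z` fiber
  have hfib : ∀ g ∈ FA.image μ, (FA.filter (fun ρ => μ ρ = g)).card
      = ((Y ∪ Z).card - b).descFactorial (Y.card - b) := by
    intro g hg
    rw [mem_image] at hg
    obtain ⟨ρ₁, hρ₁FA, hμ₁⟩ := hg
    rw [hFA, mem_filter] at hρ₁FA
    obtain ⟨-, hA₁, hX₁⟩ := hρ₁FA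
    have hT₁ : TV ⊆ Y.image ρ₁ := (Achar b hYZ hby hX₁).mp hA₁
    have hgval : ∀ t ∈ TV, g t = ρ₁.symm t := by
      intro t ht
      rw [← hμ₁, hμ]
      simp [ht]
    have hgoff : ∀ v, v ∉ TV → g v = v := by
      intro v hv
      rw [← hμ₁, hμ]
      simp [hv]
    set P := TV.image g with hP
    have hPY : P ⊆ Y := by
      intro p hp
      rw [hP, mem_image] at hp
      obtain ⟨t, ht, rfl⟩ := hp
      rw [hgval t ht]
      have := hT₁ ht
      rw [mem_image] at this
      obtain ⟨y, hy, rfl⟩ := this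
      simpa using hy
    have hPcard : P.card = b := by
      rw [hP, card_image_of_injOn, hTVcard]
      intro t ht t' ht' htt
      rw [hgval t ht, hgval t' ht'] at htt
      exact ρ₁.symm.injective htt
    have hρ₁P : ∀ t ∈ TV, ρ₁ (g t) = t := by
      intro t ht
      rw [hgval t ht]
      simp
    set Y' := Y \ P with hY'
    have hY'sub : Y' ⊆ Y := sdiff_subset
    have hY'Z : Disjoint Y' Z := disjoint_of_subset_left hY'sub hYZ
    have hY'card : Y'.card = Y.card - b := by
      rw [hY', card_sdiff_of_subset hPY, hPcard]
    have hPnYZ : ∀ p ∈ P, p ∉ Y' ∪ Z := by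
      intro p hp
      rw [mem_union]
      push_neg
      constructor
      · rw [hY', mem_sdiff]; push_neg; intro _; exact hp
      · exact fun hc => (Finset.disjoint_left.mp hYZ) (hPY hp) hc
    have hkey : FA.filter (fun ρ => μ ρ = g)
        = univ.filter (fun ρ : Equiv.Perm (Fin n) => Xi Y' Z ρ = Xi Y' Z ρ₁) := by
      ext ρ
      simp only [hFA, mem_filter, Finset.mem_univ, true_and]
      constructor
      · rintro ⟨⟨hAρ, hXρ⟩, hμρ⟩
        have hρP : ∀ t ∈ TV, ρ (g t) = t := by
          intro t ht
          have : g t = ρ.symm t := by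
            rw [← hμρ, hμ]; simp [ht]
          rw [this]; simp
        unfold Xi
        refine Prod.ext ?_ ?_
        · funext x
          by_cases hx : x ∈ Y' ∪ Z
          · simp [hx]
          · simp only [if_neg hx]
            by_cases hxP : x ∈ P
            · rw [hP, mem_image] at hxP
              obtain ⟨t, ht, rfl⟩ := hxP
              rw [hρP t ht, hρ₁P t ht]
            · have hxYZ : x ∉ Y ∪ Z := by
                rw [mem_union] at hx ⊢
                push_neg at hx ⊢
                refine ⟨?_, hx.2⟩
                intro hc
                have : x ∈ Y' := by rw [hY', mem_sdiff]; exact ⟨hc, hxP⟩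
                exact hx.1 this
              rw [Xi_offD hXρ hxYZ, Xi_offD hX₁ hxYZ]
        · funext x
          by_cases hx : x ∈ Z
          · simp only [if_pos hx]
            rw [Xi_rk hXρ hx, Xi_rk hX₁ hx]
          · simp [hx]
      · intro h'
        have hXρ : Xi Y Z ρ = Xi Y Z ρ₀ := by
          rw [← hX₁]
          exact Xi_anti_mono hY'sub h'
        have hρP : ∀ t ∈ TV, ρ (g t) = t := by
          intro t ht
          have h1 : g t ∉ Y' ∪ Z := hPnYZ _ (mem_image_of_mem g ht)
          rw [Xi_offD h' h1]
          exact hρ₁P t ht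
        have hAρ : b ≤ (Y.filter (fun x => ∀ z ∈ Z, ρ x < ρ z)).card := by
          rw [Achar b hYZ hby hXρ]
          intro t ht
          rw [mem_image]
          exact ⟨g t, hPY (mem_image_of_mem g ht), hρP t ht⟩
        refine ⟨⟨hAρ, hXρ⟩, ?_⟩
        funext v
        by_cases hv : v ∈ TV
        · rw [hμ]
          simp only [if_pos hv]
          rw [Equiv.symm_apply_eq]
          exact (hρP v hv).symm
        · rw [hμ]
          simp only [if_neg hv]
          rw [hgoff v hv]
    rw [hkey, fiber_card hY'Z ρ₁, hY'card]
    congr 1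
    have h1 : (Y' ∪ Z).card = Y'.card + Z.card := card_union_of_disjoint hY'Z
    have h2 : (Y ∪ Z).card = Y.card + Z.card := card_union_of_disjoint hYZ
    omega
  have hsum : FA.card = (FA.image μ).card * (((Y ∪ Z).card - b).descFactorial (Y.card - b)) := by
    rw [hdecomp, Finset.sum_congr rfl hfib, Finset.sum_const, smul_eq_mul]
  -- the image of μ injects into the embeddings TV ↪ Y
  have hYne : Y.Nonempty := card_pos.mp (by omega)
  obtain ⟨y₀, hy₀⟩ := hYne
  have himgle : (FA.image μ).card ≤ Y.card.descFactorial b := by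
    have hcardt : (univ.filter (fun f : {t // t ∈ TV} → {y // y ∈ Y} => Function.Injective f)).card
        = Y.card.descFactorial b := by
      rw [← Fintype.card_subtype, Fintype.card_congr (Equiv.subtypeInjectiveEquivEmbedding _ _),
        Fintype.card_embedding_eq, Fintype.card_coe, Fintype.card_coe, hTVcard]
    rw [← hcardt]
    apply Finset.card_le_card_of_injOn
      (fun g => (fun t : {t // t ∈ TV} => if h : g t ∈ Y then (⟨g t, h⟩ : {y // y ∈ Y}) else ⟨y₀, hy₀⟩))
    · intro g hg
      rw [mem_coe, mem_image] at hg
      obtain ⟨ρ₁, hρ₁FA, hμ₁⟩ := hg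
      rw [hFA, mem_filter] at hρ₁FA
      obtain ⟨-, hA₁, hX₁⟩ := hρ₁FA
      have hT₁ : TV ⊆ Y.image ρ₁ := (Achar b hYZ hby hX₁).mp hA₁
      have hgval : ∀ t ∈ TV, g t = ρ₁.symm t := by
        intro t ht
        rw [← hμ₁, hμ]
        simp [ht]
      have hgY : ∀ t : {t // t ∈ TV}, g t ∈ Y := by
        intro t
        rw [hgval t t.2]
        have := hT₁ t.2
        rw [mem_image] at this
        obtain ⟨y, hy, hyt⟩ := this
        rw [← hyt]
        simpa using hy
      rw [mem_coe, mem_filter]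
      refine ⟨Finset.mem_univ _, ?_⟩
      intro t t' htt
      simp only [dif_pos (hgY t), dif_pos (hgY t')] at htt
      have h2 : g t = g t' := congrArg Subtype.val htt
      rw [hgval t t.2, hgval t' t'.2] at h2
      exact Subtype.ext (ρ₁.symm.injective h2)
    · intro g hg g' hg' hgg
      rw [Finset.coe_image] at hg hg'  -- memberships are in coe of image
      obtain ⟨ρ₁, hρ₁FA, hμ₁⟩ := hg
      obtain ⟨ρ₂, hρ₂FA, hμ₂⟩ := hg'
      funext v
      by_cases hv : v ∈ TV
      · have h1 := congrFun hgg ⟨v, hv⟩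
        have hgY : g v ∈ Y := by
          rw [← hμ₁, hμ]
          simp only [if_pos hv]
          rw [hFA, Finset.coe_filter] at hρ₁FA
          simp only [Set.mem_setOf_eq] at hρ₁FA
          have hT₁ : TV ⊆ Y.image ρ₁ := (Achar b hYZ hby hρ₁FA.2.2).mp hρ₁FA.2.1
          have := hT₁ hv
          rw [mem_image] at this
          obtain ⟨y, hy, hyt⟩ := this
          have : ρ₁.symm v = y := by rw [← hyt]; simp
          rw [this]; exact hy
        have hgY' : g' v ∈ Y := by
          rw [← hμ₂, hμ]
          simp only [if_pos hv]
          rw [hFA, Finset.coe_filter] at hρ₂FA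
          simp only [Set.mem_setOf_eq] at hρ₂FA
          have hT₂ : TV ⊆ Y.image ρ₂ := (Achar b hYZ hby hρ₂FA.2.2).mp hρ₂FA.2.1
          have := hT₂ hv
          rw [mem_image] at this
          obtain ⟨y, hy, hyt⟩ := this
          have : ρ₂.symm v = y := by rw [← hyt]; simp
          rw [this]; exact hy
        simp only [dif_pos hgY, dif_pos hgY'] at h1
        exact congrArg Subtype.val h1
      · rw [← hμ₁, ← hμ₂, hμ]
        simp [hv]
  -- assemble
  have hF : (univ.filter (fun ρ : Equiv.Perm (Fin n) => Xi Y Z ρ = Xi Y Z ρ₀)).card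
      = ((Y ∪ Z).card).descFactorial Y.card := fiber_card hYZ ρ₀
  rw [hsum, hF]
  calc (FA.image μ).card * ((Y ∪ Z).card - b).descFactorial (Y.card - b)
        * (Y ∪ Z).card.descFactorial b
      ≤ Y.card.descFactorial b * (((Y ∪ Z).card - b).descFactorial (Y.card - b)
        * (Y ∪ Z).card.descFactorial b) := by
        rw [← Nat.mul_assoc]
        exact Nat.mul_le_mul_right _ (Nat.mul_le_mul_right _ himgle)
    _ = Y.card.descFactorial b * ((Y ∪ Z).card).descFactorial Y.card := by
        congr 1
        rw [Nat.mul_comm]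
        exact desc_mul' _ _ _ hby

/-- The conditional counting lemma: for an event depending only on the relative order on `Z`,
adding the condition "at least `b` elements of `Y` lie below all of `Z`" costs a factor
`(y)_b / (y+z)_b`. -/
theorem L1 (b : ℕ) (hb : 1 ≤ b) (Y Z : Finset (Fin n)) (hYZ : Disjoint Y Z)
    (M' : Equiv.Perm (Fin n) → Prop)
    (hM' : ∀ ρ σ : Equiv.Perm (Fin n),
      (∀ u ∈ Z, ∀ v ∈ Z, (ρ u < ρ v ↔ σ u < σ v)) → M' ρ → M' σ) :
    (univ.filter (fun ρ : Equiv.Perm (Fin n) =>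
        M' ρ ∧ b ≤ (Y.filter (fun x => ∀ z ∈ Z, ρ x < ρ z)).card)).card
        * ((Y ∪ Z).card.descFactorial b)
      ≤ Y.card.descFactorial b * (univ.filter (fun ρ : Equiv.Perm (Fin n) => M' ρ)).card := by
  have hMXi : ∀ ρ σ : Equiv.Perm (Fin n), Xi Y Z ρ = Xi Y Z σ → M' ρ → M' σ := by
    intro ρ σ h hMρ
    apply hM' ρ σ _ hMρ
    intro u hu v hv
    rw [← rk_lt_rk (ρ := ρ) hu, ← rk_lt_rk (ρ := σ) hu, Xi_rk h hu, Xi_rk h hv]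
  classical
  set s₁ := univ.filter (fun ρ : Equiv.Perm (Fin n) =>
      M' ρ ∧ b ≤ (Y.filter (fun x => ∀ z ∈ Z, ρ x < ρ z)).card) with hs₁
  set s₂ := univ.filter (fun ρ : Equiv.Perm (Fin n) => M' ρ) with hs₂
  set img := (univ : Finset (Equiv.Perm (Fin n))).image (Xi Y Z) with himg
  have hd₁ : s₁.card = ∑ c ∈ img, (s₁.filter (fun ρ => Xi Y Z ρ = c)).card :=
    card_eq_sum_card_fiberwise (fun ρ _ => mem_image_of_mem _ (Finset.mem_univ ρ))
  have hd₂ : s₂.card = ∑ c ∈ img, (s₂.filter (fun ρ => Xi Y Z ρ = c)).card :=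
    card_eq_sum_card_fiberwise (fun ρ _ => mem_image_of_mem _ (Finset.mem_univ ρ))
  have hper : ∀ c ∈ img, (s₁.filter (fun ρ => Xi Y Z ρ = c)).card
      * ((Y ∪ Z).card.descFactorial b)
      ≤ Y.card.descFactorial b * (s₂.filter (fun ρ => Xi Y Z ρ = c)).card := by
    intro c hc
    rw [mem_image] at hc
    obtain ⟨ρc, -, rfl⟩ := hc
    by_cases hMc : M' ρc
    · have he₁ : s₁.filter (fun ρ => Xi Y Z ρ = Xi Y Z ρc)
          = univ.filter (fun ρ : Equiv.Perm (Fin n) =>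
              (b ≤ (Y.filter (fun x => ∀ z ∈ Z, ρ x < ρ z)).card) ∧ Xi Y Z ρ = Xi Y Z ρc) := by
        ext ρ
        simp only [hs₁, mem_filter, Finset.mem_univ, true_and]
        constructor
        · rintro ⟨⟨hM, hA⟩, hX⟩; exact ⟨hA, hX⟩
        · rintro ⟨hA, hX⟩
          exact ⟨⟨hMXi ρc ρ hX.symm hMc, hA⟩, hX⟩
      have he₂ : s₂.filter (fun ρ => Xi Y Z ρ = Xi Y Z ρc)
          = univ.filter (fun ρ : Equiv.Perm (Fin n) => Xi Y Z ρ = Xi Y Z ρc) := by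
        ext ρ
        simp only [hs₂, mem_filter, Finset.mem_univ, true_and]
        constructor
        · rintro ⟨hM, hX⟩; exact hX
        · intro hX
          exact ⟨hMXi ρc ρ hX.symm hMc, hX⟩
      rw [he₁, he₂]
      exact fiberA_card b hb hYZ ρc
    · have he₁ : s₁.filter (fun ρ => Xi Y Z ρ = Xi Y Z ρc) = ∅ := by
        rw [Finset.filter_eq_empty_iff]
        rintro ρ hρ hX
        rw [hs₁, mem_filter] at hρ
        exact hMc (hMXi ρ ρc hX hρ.2.1)
      rw [he₁]
      simp
  calc s₁.card * ((Y ∪ Z).card.descFactorial b)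
      = ∑ c ∈ img, (s₁.filter (fun ρ => Xi Y Z ρ = c)).card
          * ((Y ∪ Z).card.descFactorial b) := by rw [hd₁, Finset.sum_mul]
    _ ≤ ∑ c ∈ img, Y.card.descFactorial b * (s₂.filter (fun ρ => Xi Y Z ρ = c)).card :=
        Finset.sum_le_sum hper
    _ = Y.card.descFactorial b * s₂.card := by rw [hd₂, Finset.mul_sum]

end FiberA

variable {n : ℕ}

def uL (L : List (Finset (Fin n))) : Finset (Fin n) := L.foldr (· ∪ ·) ∅

@[simp] lemma uL_nil : uL ([] : List (Finset (Fin n))) = ∅ := rfl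
@[simp] lemma uL_cons (τ : Finset (Fin n)) (L : List (Finset (Fin n))) :
    uL (τ :: L) = τ ∪ uL L := rfl

lemma mem_uL {L : List (Finset (Fin n))} {x : Fin n} :
    x ∈ uL L ↔ ∃ τ ∈ L, x ∈ τ := by
  induction L with
  | nil => simp
  | cons τ L ih =>
    simp only [uL_cons, mem_union, ih, List.mem_cons]
    constructor
    · rintro (hx | ⟨τ', hτ', hx⟩)
      · exact ⟨τ, Or.inl rfl, hx⟩
      · exact ⟨τ', Or.inr hτ', hx⟩
    · rintro ⟨τ', (rfl | hτ'), hx⟩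
      · exact Or.inl hx
      · exact Or.inr ⟨τ', hτ', hx⟩

def ML (b : ℕ) : Finset (Fin n) → List (Finset (Fin n)) → Equiv.Perm (Fin n) → Prop
  | _, [], _ => True
  | C, τ :: L, ρ => b ≤ ((C ∩ τ).filter (fun x => ∀ z ∈ uL L, ρ x < ρ z)).card ∧
      ML b (C ∩ τ) L ρ

lemma ML_order (b : ℕ) : ∀ (L : List (Finset (Fin n))) (C : Finset (Fin n))
    (ρ σ : Equiv.Perm (Fin n)),
    (∀ u ∈ uL L, ∀ v ∈ uL L, (ρ u < ρ v ↔ σ u < σ v)) → ML b C L ρ → ML b C L σ := by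
  intro L
  induction L with
  | nil => intro C ρ σ h hM; trivial
  | cons τ L ih =>
    intro C ρ σ h hM
    obtain ⟨h1, h2⟩ := hM
    constructor
    · have : (C ∩ τ).filter (fun x => ∀ z ∈ uL L, ρ x < ρ z)
          = (C ∩ τ).filter (fun x => ∀ z ∈ uL L, σ x < σ z) := by
        apply filter_congr
        intro x hx
        rw [mem_inter] at hx
        have hxU : x ∈ uL (τ :: L) := by
          rw [uL_cons, mem_union]; exact Or.inl hx.2
        constructor
        · intro hz z hzU
          have hzU' : z ∈ uL (τ :: L) := by
            rw [uL_cons, mem_union]; exact Or.inr hzU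
          exact (h x hxU z hzU').mp (hz z hzU)
        · intro hz z hzU
          have hzU' : z ∈ uL (τ :: L) := by
            rw [uL_cons, mem_union]; exact Or.inr hzU
          exact (h x hxU z hzU').mpr (hz z hzU)
      rwa [← this]
    · apply ih (C ∩ τ) ρ σ _ h2
      intro u hu v hv
      exact h u (by rw [uL_cons, mem_union]; exact Or.inr hu)
        v (by rw [uL_cons, mem_union]; exact Or.inr hv)

/-- all enumerations of a finite family as lists -/
noncomputable def enums (K : Finset (Finset (Fin n))) : Finset (List (Finset (Fin n))) :=
  K.toList.permutations.toFinset

lemma mem_enums {K : Finset (Finset (Fin n))} {L : List (Finset (Fin n))} :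
    L ∈ enums K ↔ L.Perm K.toList := by
  simp [enums, List.mem_permutations]

lemma uL_of_enum {K : Finset (Finset (Fin n))} {L : List (Finset (Fin n))}
    (h : L ∈ enums K) : uL L = K.sup id := by
  rw [mem_enums] at h
  ext x
  rw [mem_uL, Finset.mem_sup]
  constructor
  · rintro ⟨τ, hτ, hx⟩
    exact ⟨τ, (Finset.mem_toList).mp (h.mem_iff.mp hτ), hx⟩
  · rintro ⟨τ, hτ, hx⟩
    exact ⟨τ, h.mem_iff.mpr ((Finset.mem_toList).mpr hτ), hx⟩

lemma toList_erase_perm {K : Finset (Finset (Fin n))} {τ : Finset (Fin n)} (hτ : τ ∈ K) :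
    ((K.erase τ).toList).Perm (K.toList.erase τ) := by
  apply List.perm_of_nodup_nodup_toFinset_eq
  · exact Finset.nodup_toList _
  · exact (Finset.nodup_toList K).erase _
  · ext σ
    rw [List.mem_toFinset, Finset.mem_toList, List.mem_toFinset,
      List.Nodup.mem_erase_iff (Finset.nodup_toList K), Finset.mem_erase, Finset.mem_toList]

lemma enums_decomp {K : Finset (Finset (Fin n))} (hK : K.Nonempty) :
    enums K = K.biUnion (fun τ => (enums (K.erase τ)).image (fun L => τ :: L)) := by
  ext L
  rw [mem_enums, Finset.mem_biUnion]
  constructor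
  · intro h
    have hne : L ≠ [] := by
      intro hc
      subst hc
      have := h.symm.eq_nil
      rw [Finset.toList_eq_nil] at this
      exact Finset.not_nonempty_empty (this ▸ hK)
    obtain ⟨τ, L', rfl⟩ := List.exists_cons_of_ne_nil hne
    have hcons := (List.cons_perm_iff_perm_erase).mp h
    refine ⟨τ, Finset.mem_toList.mp hcons.1, ?_⟩
    rw [Finset.mem_image]
    refine ⟨L', ?_, rfl⟩
    rw [mem_enums]
    exact hcons.2.trans (toList_erase_perm (Finset.mem_toList.mp hcons.1)).symm
  · rintro ⟨τ, hτ, hL⟩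
    rw [Finset.mem_image] at hL
    obtain ⟨L', hL', rfl⟩ := hL
    rw [mem_enums] at hL'
    rw [List.cons_perm_iff_perm_erase]
    exact ⟨Finset.mem_toList.mpr hτ, hL'.trans (toList_erase_perm hτ)⟩

lemma enums_singleton (τ : Finset (Fin n)) : enums ({τ} : Finset (Finset (Fin n))) = {[τ]} := by
  ext L
  rw [mem_enums, Finset.toList_singleton, List.perm_singleton, Finset.mem_singleton]

lemma sum_enums_decomp {K : Finset (Finset (Fin n))} (hK : K.Nonempty)
    (f : List (Finset (Fin n)) → ℝ) :
    ∑ L ∈ enums K, f L = ∑ τ ∈ K, ∑ L' ∈ enums (K.erase τ), f (τ :: L') := by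
  rw [enums_decomp hK, Finset.sum_biUnion]
  · apply Finset.sum_congr rfl
    intro τ hτ
    rw [Finset.sum_image]
    intro L₁ _ L₂ _ h
    injection h
  · intro τ₁ h₁ τ₂ h₂ hne
    apply Finset.disjoint_left.mpr
    intro L hL₁ hL₂
    simp only [Finset.mem_image] at hL₁ hL₂
    obtain ⟨L₁, -, rfl⟩ := hL₁
    obtain ⟨L₂, -, hL⟩ := hL₂
    injection hL with hh _
    exact hne hh.symm


lemma desc_mono {a a' : ℕ} (k : ℕ) (h : a ≤ a') : a.descFactorial k ≤ a'.descFactorial k := by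
  induction k with
  | zero => simp
  | succ j ih =>
    rw [Nat.descFactorial_succ, Nat.descFactorial_succ]
    exact Nat.mul_le_mul (by omega) ih

lemma lowfilter_eq (C τ Z : Finset (Fin n)) (ρ : Equiv.Perm (Fin n)) :
    (C ∩ τ).filter (fun x => ∀ z ∈ Z, ρ x < ρ z)
      = ((C ∩ τ) \ Z).filter (fun x => ∀ z ∈ Z, ρ x < ρ z) := by
  ext x
  simp only [mem_filter, mem_sdiff]
  constructor
  · rintro ⟨hx, hP⟩
    exact ⟨⟨hx, fun hxZ => lt_irrefl _ (hP x hxZ)⟩, hP⟩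
  · rintro ⟨⟨hx, _⟩, hP⟩
    exact ⟨hx, hP⟩

/-- THE MAIN RECURSIVE BOUND -/
theorem mainLemma (b : ℕ) (hb : 1 ≤ b) : ∀ (m : ℕ), 1 ≤ m →
    ∀ (C : Finset (Fin n)) (K : Finset (Finset (Fin n))),
    K.card = m → (∀ τ ∈ K, τ.Nonempty) →
    (∑ L ∈ enums K, ((univ.filter (ML b C L)).card : ℝ))
      ≤ (Fintype.card (Equiv.Perm (Fin n)) : ℝ) * Bb b m ((C ∩ K.sup id).card) := by
  intro m
  induction m with
  | zero => omega
  | succ m ih =>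
    intro _ C K hKcard hKne
    set N : ℝ := (Fintype.card (Equiv.Perm (Fin n)) : ℝ) with hN
    have hN0 : 0 ≤ N := by rw [hN]; positivity
    rcases Nat.eq_zero_or_pos m with rfl | hm
    · -- base case : K = {τ}
      obtain ⟨τ, rfl⟩ := Finset.card_eq_one.mp hKcard
      rw [enums_singleton, Finset.sum_singleton]
      have hsup : ({τ} : Finset (Finset (Fin n))).sup id = τ := Finset.sup_singleton
      have hML : ∀ ρ : Equiv.Perm (Fin n), ML b C [τ] ρ ↔ b ≤ (C ∩ τ).card := by
        intro ρ
        show (b ≤ ((C ∩ τ).filter (fun x => ∀ z ∈ uL ([] : List (Finset (Fin n))), ρ x < ρ z)).card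
            ∧ ML b (C ∩ τ) [] ρ) ↔ _
        have : (C ∩ τ).filter (fun x => ∀ z ∈ uL ([] : List (Finset (Fin n))), ρ x < ρ z)
            = C ∩ τ := by
          apply filter_true_of_mem
          intro x _
          intro z hz
          simp at hz
        rw [this]
        constructor
        · exact fun h => h.1
        · exact fun h => ⟨h, trivial⟩
      rw [hsup]
      by_cases hc : b ≤ (C ∩ τ).card
      · have : univ.filter (ML b C [τ]) = univ := by
          apply filter_true_of_mem
          intro ρ _
          exact (hML ρ).mpr hc
        rw [this, Bb, if_pos hc]
        simp [Finset.card_univ, hN]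
      · have : univ.filter (ML b C [τ]) = ∅ := by
          rw [Finset.filter_eq_empty_iff]
          intro ρ _ hMLρ
          exact hc ((hML ρ).mp hMLρ)
        rw [this, Bb, if_neg hc]
        simp
    · -- inductive step : K.card = m + 1 ≥ 2
      have hKne' : K.Nonempty := Finset.card_pos.mp (by omega)
      set SK := K.sup id with hSK
      set γ := (C ∩ SK).card with hγ
      set Z : Finset (Fin n) → Finset (Fin n) := fun τ => (K.erase τ).sup id with hZ
      set Y : Finset (Fin n) → Finset (Fin n) := fun τ => (C ∩ τ) \ Z τ with hY
      set q : Finset (Fin n) → ℕ := fun τ => (Y τ).card with hq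
      set G : Finset (Fin n) → Finset (Fin n) := fun τ => (C ∩ τ) ∩ Z τ with hG
      set γ' : Finset (Fin n) → ℕ := fun τ => (G τ).card with hγ'
      set Q : ℕ := ∑ τ ∈ K, q τ with hQ
      -- disjointness facts
      have hYdisj : ∀ τ₁ ∈ K, ∀ τ₂ ∈ K, τ₁ ≠ τ₂ → Disjoint (Y τ₁) (Y τ₂) := by
        intro τ₁ h₁ τ₂ h₂ hne
        rw [Finset.disjoint_left]
        intro x hx hx₂
        rw [hY] at hx hx₂
        simp only [mem_sdiff, mem_inter] at hx hx₂
        apply hx.2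
        have hτ₂Z : τ₂ ⊆ Z τ₁ := by
          rw [hZ]
          exact Finset.le_sup (f := id) (Finset.mem_erase.mpr ⟨Ne.symm hne, h₂⟩)
        exact hτ₂Z hx₂.1.2
      have hYsubZ : ∀ τ ∈ K, ∀ τ' ∈ K, τ' ≠ τ → Y τ' ⊆ Z τ := by
        intro τ hτ τ' hτ' hne
        have hτ'Z : τ' ⊆ Z τ := by
          rw [hZ]
          exact Finset.le_sup (f := id) (Finset.mem_erase.mpr ⟨hne, hτ'⟩)
        intro x hx
        rw [hY] at hx
        simp only [mem_sdiff, mem_inter] at hx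
        exact hτ'Z hx.1.2
      have hYGdisj : ∀ τ ∈ K, ∀ τ' ∈ K, τ' ≠ τ → Disjoint (Y τ') (G τ) := by
        intro τ hτ τ' hτ' hne
        rw [Finset.disjoint_left]
        intro x hx hxG
        rw [hY] at hx
        rw [hG] at hxG
        simp only [mem_sdiff, mem_inter] at hx hxG
        apply hx.2
        have hτZ : τ ⊆ Z τ' := by
          rw [hZ]
          exact Finset.le_sup (f := id) (Finset.mem_erase.mpr ⟨Ne.symm hne, hτ⟩)
        exact hτZ hxG.1.2
      -- cardinality facts
      have hcard1 : ∀ τ ∈ K, Q + γ' τ ≤ (Y τ ∪ Z τ).card := by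
        intro τ hτ
        have hYZd : Disjoint (Y τ) (Z τ) := by
          rw [hY]; exact sdiff_disjoint
        rw [card_union_of_disjoint hYZd]
        have hQsplit : Q = q τ + ∑ τ' ∈ K.erase τ, q τ' := by
          rw [hQ, ← Finset.add_sum_erase _ _ hτ]
        have hB : ∑ τ' ∈ K.erase τ, q τ' + γ' τ ≤ (Z τ).card := by
          have hBU : ((K.erase τ).biUnion Y) ∪ G τ ⊆ Z τ := by
            apply Finset.union_subset
            · apply Finset.biUnion_subset.mpr
              intro τ' hτ'
              rw [Finset.mem_erase] at hτ'
              exact hYsubZ τ hτ τ' hτ'.2 hτ'.1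
            · rw [hG]; exact inter_subset_right
          have hBcard : (((K.erase τ).biUnion Y) ∪ G τ).card
              = ∑ τ' ∈ K.erase τ, q τ' + γ' τ := by
            rw [card_union_of_disjoint, Finset.card_biUnion]
            · intro τ₁ h₁ τ₂ h₂ hne
              rw [Finset.mem_coe, Finset.mem_erase] at h₁ h₂
              exact hYdisj τ₁ h₁.2 τ₂ h₂.2 hne
            · rw [Finset.disjoint_left]
              intro x hx hxG
              rw [Finset.mem_biUnion] at hx
              obtain ⟨τ', hτ', hx⟩ := hx
              rw [Finset.mem_erase] at hτ'
              exact (Finset.disjoint_left.mp (hYGdisj τ hτ τ' hτ'.2 hτ'.1)) hx hxG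
          calc ∑ τ' ∈ K.erase τ, q τ' + γ' τ = (((K.erase τ).biUnion Y) ∪ G τ).card :=
                hBcard.symm
            _ ≤ (Z τ).card := card_le_card hBU
        have hqY : q τ = (Y τ).card := rfl
        omega
      have hcard2 : ∀ τ ∈ K, Q + γ' τ ≤ γ := by
        intro τ hτ
        have hBU : (K.biUnion Y) ∪ G τ ⊆ C ∩ SK := by
          apply Finset.union_subset
          · apply Finset.biUnion_subset.mpr
            intro τ' hτ'
            rw [hY]
            intro x hx
            simp only [mem_sdiff, mem_inter] at hx
            rw [mem_inter]
            refine ⟨hx.1.1, ?_⟩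
            have : τ' ⊆ SK := Finset.le_sup (f := id) hτ'
            exact this hx.1.2
          · rw [hG]
            intro x hx
            simp only [mem_inter] at hx
            rw [mem_inter]
            refine ⟨hx.1.1, ?_⟩
            have : τ ⊆ SK := Finset.le_sup (f := id) hτ
            exact this hx.1.2
        have hBcard : ((K.biUnion Y) ∪ G τ).card = Q + γ' τ := by
          rw [card_union_of_disjoint, Finset.card_biUnion]
          · exact fun τ₁ h₁ τ₂ h₂ hne => hYdisj τ₁ h₁ τ₂ h₂ hne
          · rw [Finset.disjoint_left]
            intro x hx hxG
            rw [Finset.mem_biUnion] at hx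
            obtain ⟨τ', hτ', hx⟩ := hx
            by_cases hττ' : τ' = τ
            · subst hττ'
              rw [hY] at hx
              rw [hG] at hxG
              simp only [mem_sdiff] at hx
              exact hx.2 (mem_inter.mp hxG).2
            · exact (Finset.disjoint_left.mp (hYGdisj τ hτ τ' hτ' hττ')) hx hxG
        calc Q + γ' τ = ((K.biUnion Y) ∪ G τ).card := hBcard.symm
          _ ≤ γ := by rw [hγ]; exact card_le_card hBU
      -- rewrite the sum over enumerations
      rw [sum_enums_decomp hKne']
      -- pick the maximizing τ*
      obtain ⟨τs, hτs, hmax⟩ := Finset.exists_max_image K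
        (fun τ => Bb b m (γ' τ) / (((Q + γ' τ).descFactorial b : ℕ) : ℝ)) hKne'
      set cstar : ℝ := Bb b m (γ' τs) / (((Q + γ' τs).descFactorial b : ℕ) : ℝ) with hcstar
      have hcstar0 : 0 ≤ cstar := by
        rw [hcstar]
        exact div_nonneg (Bb_nonneg b m _ hb hm) (by positivity)
      have hqQ : ∀ τ ∈ K, q τ ≤ Q := by
        intro τ hτ
        rw [hQ]
        exact Finset.single_le_sum (fun τ' _ => Nat.zero_le _) hτ
      -- per-τ bound
      have hper : ∀ τ ∈ K,
          (∑ L' ∈ enums (K.erase τ), ((univ.filter (ML b C (τ :: L'))).card : ℝ))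
            ≤ N * ((q τ).descFactorial b : ℝ) * cstar := by
        intro τ hτ
        have hihτ : (∑ L' ∈ enums (K.erase τ), ((univ.filter (ML b (C ∩ τ) L')).card : ℝ))
            ≤ N * Bb b m (γ' τ) := by
          have h0 := ih hm (C ∩ τ) (K.erase τ) (by rw [Finset.card_erase_of_mem hτ]; omega)
            (fun τ' hτ' => hKne τ' (Finset.mem_of_mem_erase hτ'))
          exact h0
        have hYτeq : (C ∩ τ) \ Z τ = Y τ := rfl
        by_cases hqb : b ≤ q τ
        · have hdτ : b ≤ (Y τ ∪ Z τ).card :=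
            le_trans hqb (card_le_card subset_union_left)
          have hL1b : ∀ L' ∈ enums (K.erase τ),
              ((univ.filter (ML b C (τ :: L'))).card : ℝ)
                ≤ ((q τ).descFactorial b : ℝ)
                    / ((((Y τ ∪ Z τ).card.descFactorial b : ℕ)) : ℝ)
                  * ((univ.filter (ML b (C ∩ τ) L')).card : ℝ) := by
            intro L' hL'
            have huL : uL L' = Z τ := uL_of_enum hL'
            have hM'inv : ∀ ρ σ : Equiv.Perm (Fin n),
                (∀ u ∈ Z τ, ∀ v ∈ Z τ, (ρ u < ρ v ↔ σ u < σ v)) →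
                ML b (C ∩ τ) L' ρ → ML b (C ∩ τ) L' σ := by
              intro ρ σ hrel
              apply ML_order b L' (C ∩ τ) ρ σ
              rw [huL]; exact hrel
            have hfe : univ.filter (ML b C (τ :: L'))
                = univ.filter (fun ρ : Equiv.Perm (Fin n) => ML b (C ∩ τ) L' ρ
                    ∧ b ≤ ((Y τ).filter (fun x => ∀ z ∈ Z τ, ρ x < ρ z)).card) := by
              apply filter_congr
              intro ρ _
              show (b ≤ ((C ∩ τ).filter (fun x => ∀ z ∈ uL L', ρ x < ρ z)).card
                  ∧ ML b (C ∩ τ) L' ρ) ↔ _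
              rw [huL, lowfilter_eq C τ (Z τ) ρ, hYτeq]
              exact and_comm
            have hL1' := L1 b hb (Y τ) (Z τ) (by rw [← hYτeq]; exact sdiff_disjoint)
              (ML b (C ∩ τ) L') hM'inv
            rw [← hfe] at hL1'
            have hpos : (0:ℝ) < ((((Y τ ∪ Z τ).card.descFactorial b : ℕ)) : ℝ) := by
              exact_mod_cast desc_pos hdτ
            rw [div_mul_eq_mul_div, le_div_iff₀ hpos]
            calc ((univ.filter (ML b C (τ :: L'))).card : ℝ)
                  * ((((Y τ ∪ Z τ).card.descFactorial b : ℕ)) : ℝ)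
                = (((univ.filter (ML b C (τ :: L'))).card
                    * ((Y τ ∪ Z τ).card.descFactorial b) : ℕ) : ℝ) := by push_cast; ring
              _ ≤ (((q τ).descFactorial b
                    * (univ.filter (ML b (C ∩ τ) L')).card : ℕ) : ℝ) := by
                  exact_mod_cast hL1'
              _ = _ := by push_cast; ring
          have hQγpos : (0:ℝ) < (((Q + γ' τ).descFactorial b : ℕ) : ℝ) := by
            have : b ≤ Q + γ' τ := le_trans (le_trans hqb (hqQ τ hτ)) (Nat.le_add_right _ _)
            exact_mod_cast desc_pos this
          have hdescmono : (((Q + γ' τ).descFactorial b : ℕ) : ℝ)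
              ≤ ((((Y τ ∪ Z τ).card.descFactorial b : ℕ)) : ℝ) := by
            exact_mod_cast desc_mono b (hcard1 τ hτ)
          calc ∑ L' ∈ enums (K.erase τ), ((univ.filter (ML b C (τ :: L'))).card : ℝ)
              ≤ ∑ L' ∈ enums (K.erase τ),
                  ((q τ).descFactorial b : ℝ)
                    / ((((Y τ ∪ Z τ).card.descFactorial b : ℕ)) : ℝ)
                  * ((univ.filter (ML b (C ∩ τ) L')).card : ℝ) := Finset.sum_le_sum hL1b
            _ = ((q τ).descFactorial b : ℝ) / ((((Y τ ∪ Z τ).card.descFactorial b : ℕ)) : ℝ)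
                  * ∑ L' ∈ enums (K.erase τ), ((univ.filter (ML b (C ∩ τ) L')).card : ℝ) := by
                rw [Finset.mul_sum]
            _ ≤ ((q τ).descFactorial b : ℝ) / ((((Y τ ∪ Z τ).card.descFactorial b : ℕ)) : ℝ)
                  * (N * Bb b m (γ' τ)) := by
                apply mul_le_mul_of_nonneg_left hihτ
                positivity
            _ ≤ ((q τ).descFactorial b : ℝ) / (((Q + γ' τ).descFactorial b : ℕ) : ℝ)
                  * (N * Bb b m (γ' τ)) := by
                apply mul_le_mul_of_nonneg_right _
                  (mul_nonneg hN0 (Bb_nonneg b m _ hb hm))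
                apply div_le_div_of_nonneg_left (by positivity) hQγpos hdescmono
            _ = N * ((q τ).descFactorial b : ℝ)
                  * (Bb b m (γ' τ) / (((Q + γ' τ).descFactorial b : ℕ) : ℝ)) := by
                ring
            _ ≤ N * ((q τ).descFactorial b : ℝ) * cstar := by
                apply mul_le_mul_of_nonneg_left (hmax τ hτ)
                positivity
        · -- q τ < b : every term vanishes
          have hzero : ∀ L' ∈ enums (K.erase τ),
              ((univ.filter (ML b C (τ :: L'))).card : ℝ) = 0 := by
            intro L' hL'
            have huL : uL L' = Z τ := uL_of_enum hL'
            have hempty : univ.filter (ML b C (τ :: L')) = ∅ := by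
              rw [Finset.filter_eq_empty_iff]
              intro ρ _ hMLρ
              obtain ⟨h1, -⟩ := hMLρ
              rw [huL, lowfilter_eq C τ (Z τ) ρ, hYτeq] at h1
              have h2 : ((Y τ).filter (fun x => ∀ z ∈ Z τ, ρ x < ρ z)).card ≤ q τ :=
                card_le_card (filter_subset _ _)
              omega
            rw [hempty]
            simp
          rw [Finset.sum_congr rfl hzero, Finset.sum_const_zero]
          positivity
      -- total
      calc ∑ τ ∈ K, ∑ L' ∈ enums (K.erase τ), ((univ.filter (ML b C (τ :: L'))).card : ℝ)
          ≤ ∑ τ ∈ K, N * ((q τ).descFactorial b : ℝ) * cstar := Finset.sum_le_sum hper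
        _ = N * cstar * ∑ τ ∈ K, ((q τ).descFactorial b : ℝ) := by
            rw [Finset.mul_sum]
            apply Finset.sum_congr rfl
            intro τ _
            ring
        _ ≤ N * cstar * ((Q.descFactorial b : ℕ) : ℝ) := by
            apply mul_le_mul_of_nonneg_left _ (mul_nonneg hN0 hcstar0)
            have := sum_desc_le b hb K q
            rw [← hQ] at this
            calc ∑ τ ∈ K, ((q τ).descFactorial b : ℝ)
                = ((∑ τ ∈ K, (q τ).descFactorial b : ℕ) : ℝ) := by push_cast; ring
              _ ≤ ((Q.descFactorial b : ℕ) : ℝ) := by exact_mod_cast this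
        _ ≤ N * Bb b (m+1) γ := by
            by_cases hbQ : b ≤ Q
            · have hks := keystep b (m+1) Q (γ' τs) γ hb (by omega) hbQ (hcard2 τs hτs)
              rw [Nat.succ_sub_one] at hks
              calc N * cstar * ((Q.descFactorial b : ℕ) : ℝ)
                  = N * ((Q.descFactorial b : ℝ)
                      / (((Q + γ' τs).descFactorial b : ℕ) : ℝ) * Bb b m (γ' τs)) := by
                    rw [hcstar]; ring
                _ ≤ N * Bb b (m+1) γ := mul_le_mul_of_nonneg_left hks hN0
            · have : Q.descFactorial b = 0 := by
                rw [Nat.descFactorial_eq_zero_iff_lt]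
                omega
              rw [this]
              simp only [Nat.cast_zero, mul_zero]
              exact mul_nonneg hN0 (Bb_nonneg b (m+1) _ hb (by omega))


lemma card_filter_Ico (k a c : ℕ) (hc : a + c ≤ k) :
    ((univ : Finset (Fin k)).filter (fun t : Fin k => a ≤ (t : ℕ) ∧ (t : ℕ) < a + c)).card = c := by
  have himg : ((univ : Finset (Fin k)).filter (fun t : Fin k => a ≤ (t : ℕ) ∧ (t : ℕ) < a + c)).image
      Fin.val = Finset.Ico a (a + c) := by
    ext m
    simp only [Finset.mem_image, mem_filter, Finset.mem_univ, true_and, Finset.mem_Ico]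
    constructor
    · rintro ⟨t, ht, rfl⟩; exact ht
    · intro hm
      exact ⟨⟨m, by omega⟩, by simpa using hm, rfl⟩
  have h2 := card_image_of_injective
    ((univ : Finset (Fin k)).filter (fun t : Fin k => a ≤ (t : ℕ) ∧ (t : ℕ) < a + c)) Fin.val_injective
  rw [himg, Nat.card_Ico] at h2
  omega

/-- extraction of the recursive event from a "bad" witness -/
lemma claimA {k b r : ℕ} (hb : 1 ≤ b) (hk : k = r * b) (hr : 1 ≤ r)
    (J : Finset (Finset (Fin n))) (hJcard : J.card = r)
    (ρ : Equiv.Perm (Fin n)) (i : Fin k → Fin n) (hmono : StrictMono i)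
    (hcomp : ∀ s ∈ Finset.range r, ∃ τ ∈ J, Compatible ρ τ
      ((Finset.univ.filter (fun t : Fin k => s * b ≤ (t : ℕ))).image i)) :
    ∃ L ∈ enums J, ML b Finset.univ L ρ := by
  classical
  -- notation for the tail index sets
  set I : ℕ → Finset (Fin n) :=
    fun s => (Finset.univ.filter (fun t : Fin k => s * b ≤ (t : ℕ))).image i with hI
  -- choose the row for each level
  have hchoice : ∀ s : ℕ, s < r → ∃ τ ∈ J, Compatible ρ τ (I s) := by
    intro s hs
    exact hcomp s (Finset.mem_range.mpr hs)
  set T : ℕ → Finset (Fin n) := fun s =>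
    if hs : s < r then (hchoice s hs).choose else ∅ with hT
  have hTJ : ∀ s, s < r → T s ∈ J := by
    intro s hs
    rw [hT]; simp only [dif_pos hs]
    exact (hchoice s hs).choose_spec.1
  have hTcomp : ∀ s, s < r → Compatible ρ (T s) (I s) := by
    intro s hs
    rw [hT]; simp only [dif_pos hs]
    exact (hchoice s hs).choose_spec.2
  -- membership of index images
  have hiI : ∀ (s : ℕ) (t : Fin k), s * b ≤ (t : ℕ) → i t ∈ I s := by
    intro s t ht
    rw [hI]
    exact mem_image_of_mem i (mem_filter.mpr ⟨Finset.mem_univ t, ht⟩)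
  have hpre : ∀ (s : ℕ) (t : Fin k), s < r → s * b ≤ (t : ℕ) → ρ.symm (i t) ∈ T s := by
    intro s t hs ht
    have h1 : i t ∈ (T s).image ⇑ρ := (hTcomp s hs).1 (hiI s t ht)
    rw [mem_image] at h1
    obtain ⟨u, hu, hui⟩ := h1
    have : ρ.symm (i t) = u := by rw [← hui]; simp
    rw [this]; exact hu
  -- the key "everything in later rows is above the current block"
  have hlater : ∀ (s' : ℕ) (t : Fin k), s' < r → (t : ℕ) < s' * b →
      ∀ z ∈ T s', i t < ρ z := by
    intro s' t hs' ht z hz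
    have h1 : ρ z ∈ (T s').image ⇑ρ := mem_image_of_mem _ hz
    obtain ⟨a, ha, haz⟩ := (hTcomp s' hs').2 (ρ z) h1
    rw [hI] at ha
    rw [mem_image] at ha
    obtain ⟨t', ht', rfl⟩ := ha
    rw [mem_filter] at ht'
    have htt' : t < t' := by
      rw [Fin.lt_def]; omega
    exact lt_of_lt_of_le (hmono htt') haz
  -- injectivity of T on range r
  have hTinj : ∀ s s', s < r → s' < r → T s = T s' → s = s' := by
    intro s s' hs hs' hss
    by_contra hne
    -- wlog s < s'
    rcases Nat.lt_or_ge s s' with hlt | hge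
    · -- i (s*b) is in image of T s = T s', but everything in T s' is ≥ elements of I s'
      have hsb : s * b < k := by
        rw [hk]; nlinarith
      set t₀ : Fin k := ⟨s * b, hsb⟩ with ht₀
      have h1 : i t₀ ∈ (T s).image ⇑ρ := (hTcomp s hs).1 (hiI s t₀ (by simp [ht₀]))
      rw [hss] at h1
      obtain ⟨a, ha, hale⟩ := (hTcomp s' hs').2 (i t₀) h1
      rw [hI, mem_image] at ha
      obtain ⟨t', ht', rfl⟩ := ha
      rw [mem_filter] at ht'
      have htt' : t₀ < t' := by
        rw [Fin.lt_def]
        have : s' * b ≤ (t' : ℕ) := ht'.2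
        have hssb : s * b < s' * b := by nlinarith
        simp only [ht₀]
        omega
      exact absurd hale (not_le.mpr (hmono htt'))
    · have hlt : s' < s := by omega
      have hsb : s' * b < k := by
        rw [hk]; nlinarith
      set t₀ : Fin k := ⟨s' * b, hsb⟩ with ht₀
      have h1 : i t₀ ∈ (T s').image ⇑ρ := (hTcomp s' hs').1 (hiI s' t₀ (by simp [ht₀]))
      rw [← hss] at h1
      obtain ⟨a, ha, hale⟩ := (hTcomp s hs).2 (i t₀) h1
      rw [hI, mem_image] at ha
      obtain ⟨t', ht', rfl⟩ := ha
      rw [mem_filter] at ht'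
      have htt' : t₀ < t' := by
        rw [Fin.lt_def]
        have : s * b ≤ (t' : ℕ) := ht'.2
        have hssb : s' * b < s * b := by nlinarith
        simp only [ht₀]
        omega
      exact absurd hale (not_le.mpr (hmono htt'))
  -- the list
  set L : List (Finset (Fin n)) := (List.range r).map T with hL
  have hLnodup : L.Nodup := by
    rw [hL]
    apply List.Nodup.map_on
    · intro s hs s' hs' hss
      rw [List.mem_range] at hs hs'
      exact hTinj s s' hs hs' hss
    · exact List.nodup_range
  have hLJ : L.toFinset = J := by
    apply Finset.eq_of_subset_of_card_le
    · intro τ hτ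
      rw [hL, List.mem_toFinset, List.mem_map] at hτ
      obtain ⟨s, hs, rfl⟩ := hτ
      exact hTJ s (List.mem_range.mp hs)
    · rw [hJcard, List.card_toFinset, hLnodup.dedup, hL, List.length_map, List.length_range]
  refine ⟨L, ?_, ?_⟩
  · rw [mem_enums]
    apply List.perm_of_nodup_nodup_toFinset_eq hLnodup (Finset.nodup_toList J)
    rw [hLJ, Finset.toList_toFinset]
  -- now the ML property, by induction on the remaining length
  · have main : ∀ d j, j + d = r → ∀ C : Finset (Fin n),
        (∀ t : Fin k, j * b ≤ (t : ℕ) → ρ.symm (i t) ∈ C) →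
        ML b C ((List.range d).map (fun s => T (j + s))) ρ := by
      intro d
      induction d with
      | zero => intro j hj C hC; trivial
      | succ d ih =>
        intro j hj C hC
        have hjr : j < r := by omega
        have hsplit : (List.range (d+1)).map (fun s => T (j + s))
            = T j :: (List.range d).map (fun s => T ((j+1) + s)) := by
          rw [List.range_succ_eq_map, List.map_cons, List.map_map]
          congr 1
          apply List.map_congr_left
          intro s hs
          simp only [Function.comp_apply]
          congr 1
          omega
        rw [hsplit]
        have hUsub : ∀ z ∈ uL ((List.range d).map (fun s => T ((j+1) + s))),
            ∃ s', j < s' ∧ s' < r ∧ z ∈ T s' := by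
          intro z hz
          rw [mem_uL] at hz
          obtain ⟨τ', hτ', hzτ'⟩ := hz
          rw [List.mem_map] at hτ'
          obtain ⟨s, hs, rfl⟩ := hτ'
          rw [List.mem_range] at hs
          exact ⟨(j+1) + s, by omega, by omega, hzτ'⟩
        constructor
        · -- the block witnesses
          set S : Finset (Fin n) := ((univ : Finset (Fin k)).filter
              (fun t : Fin k => j * b ≤ (t : ℕ) ∧ (t : ℕ) < j * b + b)).image
              (fun t => ρ.symm (i t)) with hS
          have hScard : S.card = b := by
            rw [hS, card_image_of_injective _
              (fun t t' htt => hmono.injective (ρ.symm.injective htt)),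
              card_filter_Ico k (j*b) b]
            rw [hk]; nlinarith
          have hSsub : S ⊆ (C ∩ T j).filter
              (fun x => ∀ z ∈ uL ((List.range d).map (fun s => T ((j+1) + s))), ρ x < ρ z) := by
            intro x hx
            rw [hS, mem_image] at hx
            obtain ⟨t, ht, rfl⟩ := hx
            rw [mem_filter] at ht ⊢
            obtain ⟨-, htj, htj'⟩ := ht
            refine ⟨mem_inter.mpr ⟨hC t htj, hpre j t hjr htj⟩, ?_⟩
            intro z hz
            obtain ⟨s', hjs', hs'r, hzs'⟩ := hUsub z hz
            have : ρ (ρ.symm (i t)) = i t := by simp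
            rw [this]
            apply hlater s' t hs'r _ z hzs'
            nlinarith
          calc b = S.card := hScard.symm
            _ ≤ _ := card_le_card hSsub
        · -- recursion
          apply ih (j+1) (by omega)
          intro t ht
          have hjb : j * b ≤ (t : ℕ) := by nlinarith
          rw [mem_inter]
          exact ⟨hC t hjb, hpre j t hjr hjb⟩
    have h0 := main r 0 (by omega) Finset.univ (fun t _ => Finset.mem_univ _)
    have : (List.range r).map (fun s => T (0 + s)) = L := by
      rw [hL]
      apply List.map_congr_left
      intro s _
      congr 1
      omega
    rwa [this] at h0

end S14

/-- with `k = rb`, for any `r`-element subfamily `J` of the Venn diagram, the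
number of permutations `ρ` of `[n]` that are "bad for `J`" — i.e. for which there exist
`i_1 < ⋯ < i_k` (encoded by a strictly monotone `i : Fin k → Fin n`, the `1`-indexed
position `s·b+1` being the `0`-indexed position `s·b`) such that for every
`s ∈ {1, b+1, …, (r−1)b+1}` some `τ ∈ J` is `ρ`-compatible with `{i_s, …, i_k}` — is at
most `n! · (1 − (b/n)^{1/(r−1)})^{b(r−1)}`. -/
theorem stmt14 {S : Type*} {n r b : ℕ} (hr : 2 ≤ r) (hb : 1 < b) (hbn : b < n)
    (k : ℕ) (hk : k = r * b)
    (F : Fin n → Set S) {m : ℕ} (hm : (venn F).ncard = m)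
    (J : Finset (Finset (Fin n))) (hJ : (J : Set (Finset (Fin n))) ⊆ venn F)
    (hJcard : J.card = r) :
    ((Finset.univ.filter (fun ρ : Equiv.Perm (Fin n) =>
        ∃ i : Fin k → Fin n, StrictMono i ∧
          ∀ s ∈ Finset.range r, ∃ τ ∈ J, Compatible ρ τ
            ((Finset.univ.filter (fun t : Fin k => s * b ≤ (t : ℕ))).image i))).card : ℝ) ≤
      (n.factorial : ℝ) *
        (1 - ((b : ℝ) / (n : ℝ)) ^ ((1 : ℝ) / ((r : ℝ) - 1))) ^ (b * (r - 1)) := by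
  classical
  have hb1 : 1 ≤ b := by omega
  have hr1 : 1 ≤ r := by omega
  have hne : ∀ τ ∈ J, τ.Nonempty := fun τ hτ => (hJ hτ).1
  have hsub : (Finset.univ.filter (fun ρ : Equiv.Perm (Fin n) =>
        ∃ i : Fin k → Fin n, StrictMono i ∧
          ∀ s ∈ Finset.range r, ∃ τ ∈ J, Compatible ρ τ
            ((Finset.univ.filter (fun t : Fin k => s * b ≤ (t : ℕ))).image i)))
      ⊆ (S14.enums J).biUnion
          (fun L => Finset.univ.filter (S14.ML b Finset.univ L)) := by
    intro ρ hρ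
    rw [Finset.mem_filter] at hρ
    obtain ⟨-, i, hmono, hcomp⟩ := hρ
    obtain ⟨L, hL, hML⟩ := S14.claimA hb1 hk hr1 J hJcard ρ i hmono hcomp
    rw [Finset.mem_biUnion]
    exact ⟨L, hL, Finset.mem_filter.mpr ⟨Finset.mem_univ _, hML⟩⟩
  have h1 : (Finset.univ.filter (fun ρ : Equiv.Perm (Fin n) =>
        ∃ i : Fin k → Fin n, StrictMono i ∧
          ∀ s ∈ Finset.range r, ∃ τ ∈ J, Compatible ρ τ
            ((Finset.univ.filter (fun t : Fin k => s * b ≤ (t : ℕ))).image i))).card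
      ≤ ∑ L ∈ S14.enums J, (Finset.univ.filter (S14.ML b Finset.univ L)).card :=
    le_trans (Finset.card_le_card hsub) Finset.card_biUnion_le
  have h2 := S14.mainLemma b hb1 r hr1 Finset.univ J hJcard hne
  have hγn : ((Finset.univ ∩ J.sup id).card) ≤ n := by
    calc (Finset.univ ∩ J.sup id).card ≤ (Finset.univ : Finset (Fin n)).card :=
          Finset.card_le_card (Finset.inter_subset_left)
      _ = n := by rw [Finset.card_univ, Fintype.card_fin]
  have h3 : S14.Bb b r ((Finset.univ ∩ J.sup id).card) ≤ S14.Bb b r n :=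
    S14.Bb_mono b r hb1 hr1 hγn
  have hN : ((Fintype.card (Equiv.Perm (Fin n)) : ℕ) : ℝ) = (n.factorial : ℝ) := by
    rw [Fintype.card_perm, Fintype.card_fin]
  have hBbn : S14.Bb b r n
      = (1 - ((b : ℝ) / (n : ℝ)) ^ ((1 : ℝ) / ((r : ℝ) - 1))) ^ (b * (r - 1)) := by
    rw [S14.Bb, if_pos (le_of_lt hbn)]
  have hN0 : (0:ℝ) ≤ ((Fintype.card (Equiv.Perm (Fin n)) : ℕ) : ℝ) := by positivity
  calc ((Finset.univ.filter (fun ρ : Equiv.Perm (Fin n) =>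
        ∃ i : Fin k → Fin n, StrictMono i ∧
          ∀ s ∈ Finset.range r, ∃ τ ∈ J, Compatible ρ τ
            ((Finset.univ.filter (fun t : Fin k => s * b ≤ (t : ℕ))).image i))).card : ℝ)
      ≤ ((∑ L ∈ S14.enums J, (Finset.univ.filter (S14.ML b Finset.univ L)).card : ℕ) : ℝ) := by
        exact_mod_cast h1
    _ = ∑ L ∈ S14.enums J, ((Finset.univ.filter (S14.ML b Finset.univ L)).card : ℝ) := by
        push_cast; ring
    _ ≤ ((Fintype.card (Equiv.Perm (Fin n)) : ℕ) : ℝ)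
          * S14.Bb b r ((Finset.univ ∩ J.sup id).card) := h2
    _ ≤ ((Fintype.card (Equiv.Perm (Fin n)) : ℕ) : ℝ) * S14.Bb b r n :=
        mul_le_mul_of_nonneg_left h3 hN0
    _ = (n.factorial : ℝ) *
        (1 - ((b : ℝ) / (n : ℝ)) ^ ((1 : ℝ) / ((r : ℝ) - 1))) ^ (b * (r - 1)) := by
        rw [hN, hBbn]
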